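/- arXiv:1705.00807 — 5 statements merged into one kernel-verified Lean document; each statement's English description precedes it below -/
import Mathlib

section
/- Let n be a positive integer, q ∈ [0,1], and let q̂ = X/n where X ~ Poisson(nq). Then: (i) if 0 ≤ q ≤ 1/n, E|q̂ − q| = 2q e^{−nq}; (ii) if q ≥ 1/n, √(q/(2n)) ≤ E|q̂ − q| ≤ √(q/n); consequently, for all q ∈ [0,1], (1/√2)·min{q, √(q/n)} ≤ E|q̂ − q| ≤ 2·min{q, √(q/n)}. -/
open scoped BigOperators

/-- The Poisson(lam) probability mass function on the nonnegative integers. -/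
noncomputable def poissonPMF (lam : ℝ) (k : ℕ) : ℝ :=
  Real.exp (-lam) * lam ^ k / (Nat.factorial k)

/-- Expectation of `f` under the Poisson(lam) distribution. -/
noncomputable def poissonE (lam : ℝ) (f : ℕ → ℝ) : ℝ :=
  ∑' k : ℕ, poissonPMF lam k * f k

-- helper lemmas
namespace PoissonAux

lemma tsum_exp (x : ℝ) : ∑' k : ℕ, x ^ k / (Nat.factorial k) = Real.exp x := by
  rw [Real.exp_eq_exp_ℝ, NormedSpace.exp_eq_tsum_div]

lemma pmf_eq (lam : ℝ) : poissonPMF lam = fun k => Real.exp (-lam) * (lam ^ k / (Nat.factorial k)) := by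
  funext k; unfold poissonPMF; ring

lemma pmf_nonneg {lam : ℝ} (h : 0 ≤ lam) (k : ℕ) : 0 ≤ poissonPMF lam k := by
  unfold poissonPMF; positivity

lemma summable_pmf (lam : ℝ) : Summable (poissonPMF lam) := by
  rw [pmf_eq]
  exact (Real.summable_pow_div_factorial lam).mul_left _

lemma tsum_pmf (lam : ℝ) : ∑' k, poissonPMF lam k = 1 := by
  rw [pmf_eq, tsum_mul_left, tsum_exp, ← Real.exp_add]
  simp

lemma factpos (k : ℕ) : (0:ℝ) < (Nat.factorial k : ℝ) := by
  exact_mod_cast k.factorial_pos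

lemma shift1 (lam : ℝ) (k : ℕ) :
    poissonPMF lam (k+1) * ((k:ℝ)+1) = lam * poissonPMF lam k := by
  unfold poissonPMF
  rw [Nat.factorial_succ]
  have h := factpos k
  push_cast
  field_simp
  ring

lemma shift2 (lam : ℝ) (k : ℕ) :
    poissonPMF lam (k+2) * (((k:ℝ)+2) * ((k:ℝ)+1)) = lam^2 * poissonPMF lam k := by
  unfold poissonPMF
  rw [show k+2 = (k+1)+1 from rfl, Nat.factorial_succ, Nat.factorial_succ]
  have h := factpos k
  push_cast
  field_simp
  ring

lemma summable_m1 (lam : ℝ) : Summable (fun k : ℕ => poissonPMF lam k * k) := by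
  rw [← summable_nat_add_iff 1]
  refine ((summable_pmf lam).mul_left lam).congr fun k => ?_
  push_cast
  exact (shift1 lam k).symm

lemma tsum_m1 (lam : ℝ) : ∑' k : ℕ, poissonPMF lam k * k = lam := by
  rw [Summable.tsum_eq_zero_add (summable_m1 lam)]
  have h0 : ∑' k : ℕ, poissonPMF lam (k+1) * ((k+1:ℕ):ℝ) = lam := by
    rw [tsum_congr (fun k : ℕ => by push_cast; exact shift1 lam k), tsum_mul_left,
      tsum_pmf, mul_one]
  simpa using h0

lemma summable_m2 (lam : ℝ) :
    Summable (fun k : ℕ => poissonPMF lam k * ((k:ℝ) * ((k:ℝ) - 1))) := by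
  rw [← summable_nat_add_iff 2]
  refine ((summable_pmf lam).mul_left (lam^2)).congr fun k => ?_
  push_cast
  rw [show ((k:ℝ)+2-1) = (k:ℝ)+1 by ring]
  exact (shift2 lam k).symm

lemma tsum_m2 (lam : ℝ) :
    ∑' k : ℕ, poissonPMF lam k * ((k:ℝ) * ((k:ℝ) - 1)) = lam^2 := by
  rw [Summable.tsum_eq_zero_add (summable_m2 lam), Summable.tsum_eq_zero_add
    ((summable_nat_add_iff 1).mpr (summable_m2 lam))]
  have h0 : ∑' k : ℕ, poissonPMF lam (k+1+1) * (((k:ℝ)+1+1) * ((k:ℝ)+1+1-1)) = lam^2 := by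
    have hc : (fun k : ℕ => poissonPMF lam (k+1+1) * (((k:ℝ)+1+1) * ((k:ℝ)+1+1-1))) =
        (fun k : ℕ => lam^2 * poissonPMF lam k) := by
      funext k
      rw [show ((k:ℝ)+1+1-1) = (k:ℝ)+1 by ring, show ((k:ℝ)+1+1) = (k:ℝ)+2 by ring]
      exact shift2 lam k
    rw [hc, tsum_mul_left, tsum_pmf, mul_one]
  push_cast
  rw [h0]
  norm_num

lemma summable_sq (lam : ℝ) :
    Summable (fun k : ℕ => poissonPMF lam k * ((k:ℝ) - lam)^2) := by
  refine (((summable_m2 lam).add (((summable_m1 lam).mul_left (1-2*lam)).add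
    ((summable_pmf lam).mul_left (lam^2)))).congr fun k => ?_)
  ring

lemma tsum_sq (lam : ℝ) :
    ∑' k : ℕ, poissonPMF lam k * ((k:ℝ) - lam)^2 = lam := by
  have h : ∀ k : ℕ, poissonPMF lam k * ((k:ℝ) - lam)^2 =
      poissonPMF lam k * ((k:ℝ) * ((k:ℝ)-1)) +
        ((1 - 2*lam) * (poissonPMF lam k * k) + lam^2 * poissonPMF lam k) := by
    intro k; ring
  rw [tsum_congr h, Summable.tsum_add (summable_m2 lam) (((summable_m1 lam).mul_left _).add
      ((summable_pmf lam).mul_left _)),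
    Summable.tsum_add ((summable_m1 lam).mul_left _) ((summable_pmf lam).mul_left _),
    tsum_mul_left, tsum_mul_left, tsum_m2, tsum_m1, tsum_pmf]
  ring

lemma trunc (lam : ℝ) (M : ℕ) :
    ∑ k ∈ Finset.range (M+1), poissonPMF lam k * (lam - k) =
      Real.exp (-lam) * lam^(M+1) / (Nat.factorial M) := by
  induction M with
  | zero => simp [poissonPMF]
  | succ M ih =>
      rw [Finset.sum_range_succ, ih]
      unfold poissonPMF
      rw [Nat.factorial_succ]
      have h := factpos M
      have h2 : ((M+1 : ℕ):ℝ) ≠ 0 := by positivity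
      push_cast
      field_simp
      ring

lemma mad (lam : ℝ) (h : 0 ≤ lam) :
    (Summable fun k : ℕ => poissonPMF lam k * |(k:ℝ) - lam|) ∧
    ∑' k : ℕ, poissonPMF lam k * |(k:ℝ) - lam| =
      2 * (Real.exp (-lam) * lam^(Nat.floor lam + 1) / (Nat.factorial (Nat.floor lam))) := by
  set m := Nat.floor lam with hm
  set f : ℕ → ℝ := fun k => poissonPMF lam k * ((k:ℝ) - lam) with hf
  set g : ℕ → ℝ := fun k => poissonPMF lam k * max (lam - k) 0 with hg
  have hsplit : ∀ k : ℕ, poissonPMF lam k * |(k:ℝ) - lam| = f k + 2 * g k := by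
    intro k
    rcases le_total lam k with h' | h'
    · rw [hf, hg]; simp only
      rw [abs_of_nonneg (by linarith), max_eq_right (by linarith)]; ring
    · rw [hf, hg]; simp only
      rw [abs_of_nonpos (by linarith), max_eq_left (by linarith)]; ring
  have hsf : Summable f := by
    refine ((summable_m1 lam).sub ((summable_pmf lam).mul_left lam)).congr fun k => ?_
    simp only [hf]; ring
  have htf : ∑' k, f k = 0 := by
    have : ∀ k : ℕ, f k = poissonPMF lam k * k - lam * poissonPMF lam k := by
      intro k; simp only [hf]; ring
    rw [tsum_congr this, Summable.tsum_sub (summable_m1 lam) ((summable_pmf lam).mul_left lam),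
      tsum_m1, tsum_mul_left, tsum_pmf, mul_one, sub_self]
  have hg0 : ∀ k : ℕ, k ∉ Finset.range (m+1) → g k = 0 := by
    intro k hk
    have hk' : m + 1 ≤ k := by simpa using Finset.mem_range.not.mp hk
    have hlk : lam < k := by
      calc lam < (m:ℝ) + 1 := Nat.lt_floor_add_one lam
        _ ≤ k := by exact_mod_cast Nat.cast_le.mpr hk'
    simp only [hg]
    rw [max_eq_right (by linarith), mul_zero]
  have hsg : Summable g := summable_of_ne_finset_zero hg0
  have htg : ∑' k, g k = Real.exp (-lam) * lam^(m+1) / (Nat.factorial m) := by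
    rw [tsum_eq_sum hg0, ← trunc lam m]
    refine Finset.sum_congr rfl fun k hk => ?_
    have hk' : (k:ℝ) ≤ lam := by
      have : k ≤ m := Nat.lt_succ_iff.mp (Finset.mem_range.mp hk)
      calc (k:ℝ) ≤ m := by exact_mod_cast this
        _ ≤ lam := Nat.floor_le h
    simp only [hg]
    rw [max_eq_left (by linarith)]
  have heq : (fun k : ℕ => poissonPMF lam k * |(k:ℝ) - lam|) = fun k => f k + 2 * g k :=
    funext hsplit
  constructor
  · rw [heq]; exact hsf.add (hsg.mul_left 2)
  · rw [heq, Summable.tsum_add hsf (hsg.mul_left 2), tsum_mul_left, htf, htg, zero_add]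

lemma upper (lam : ℝ) (h : 0 ≤ lam) :
    ∑' k : ℕ, poissonPMF lam k * |(k:ℝ) - lam| ≤ Real.sqrt lam := by
  refine Summable.tsum_le_of_sum_le ((mad lam h).1) fun s => ?_
  have hnn : 0 ≤ ∑ k ∈ s, poissonPMF lam k * |(k:ℝ) - lam| :=
    Finset.sum_nonneg fun k _ => mul_nonneg (pmf_nonneg h k) (abs_nonneg _)
  rw [show Real.sqrt lam = Real.sqrt (1 * lam) by rw [one_mul]]
  rw [Real.le_sqrt hnn (by positivity)]
  have hcs := Finset.sum_mul_sq_le_sq_mul_sq s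
    (fun k => Real.sqrt (poissonPMF lam k))
    (fun k => Real.sqrt (poissonPMF lam k) * |(k:ℝ) - lam|)
  have h1 : ∀ k : ℕ, Real.sqrt (poissonPMF lam k) *
      (Real.sqrt (poissonPMF lam k) * |(k:ℝ) - lam|) = poissonPMF lam k * |(k:ℝ) - lam| := by
    intro k
    rw [← mul_assoc, Real.mul_self_sqrt (pmf_nonneg h k)]
  have h2 : ∀ k : ℕ, Real.sqrt (poissonPMF lam k) ^ 2 = poissonPMF lam k :=
    fun k => Real.sq_sqrt (pmf_nonneg h k)
  have h3 : ∀ k : ℕ, (Real.sqrt (poissonPMF lam k) * |(k:ℝ) - lam|) ^ 2 =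
      poissonPMF lam k * ((k:ℝ) - lam)^2 := by
    intro k
    rw [mul_pow, Real.sq_sqrt (pmf_nonneg h k), sq_abs]
  rw [Finset.sum_congr rfl fun k _ => h1 k, Finset.sum_congr rfl fun k _ => h2 k,
    Finset.sum_congr rfl fun k _ => h3 k] at hcs
  refine hcs.trans (mul_le_mul ?_ ?_ ?_ zero_le_one)
  · rw [← tsum_pmf lam]
    exact Summable.sum_le_tsum s (fun k _ => pmf_nonneg h k) (summable_pmf lam)
  · exact le_trans (Summable.sum_le_tsum s (fun k _ => mul_nonneg (pmf_nonneg h k) (sq_nonneg _))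
      (summable_sq lam)) (le_of_eq (tsum_sq lam))
  · exact Finset.sum_nonneg fun k _ => mul_nonneg (pmf_nonneg h k) (sq_nonneg _)

lemma e_le : Real.exp 1 ≤ 2 * Real.sqrt 2 := by
  have h1 : Real.exp 1 < 2.7182818286 := Real.exp_one_lt_d9
  have h2 : (1.4:ℝ) ≤ Real.sqrt 2 := by
    rw [show (2:ℝ) = 1.4^2 + 0.04 by norm_num]
    nlinarith [Real.sq_sqrt (by norm_num : (0:ℝ) ≤ 1.4^2 + 0.04),
      Real.sqrt_nonneg (1.4^2+0.04:ℝ)]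
  linarith

lemma mono_inc {c a b : ℝ} (ha : 0 < a) (hab : a ≤ b) (hbc : b ≤ c) :
    a ^ c * Real.exp (-a) ≤ b ^ c * Real.exp (-b) := by
  have hb : 0 < b := lt_of_lt_of_le ha hab
  have hlog : Real.log a - Real.log b ≤ a/b - 1 := by
    have := Real.log_le_sub_one_of_pos (x := a/b) (by positivity)
    rwa [Real.log_div (ne_of_gt ha) (ne_of_gt hb)] at this
  have hx : (0:ℝ) ≤ (b - a)/b := div_nonneg (by linarith) hb.le
  have h3 : b * ((b-a)/b) ≤ c * ((b-a)/b) := mul_le_mul_of_nonneg_right hbc hx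
  have h4 : b * ((b-a)/b) = b - a := by field_simp
  have h5 : (b-a)/b ≤ Real.log b - Real.log a := by
    have : a/b - 1 = -((b-a)/b) := by field_simp; ring
    linarith [hlog.trans_eq this]
  have h6 : c * ((b-a)/b) ≤ c * (Real.log b - Real.log a) :=
    mul_le_mul_of_nonneg_left h5 (le_trans hb.le hbc)
  rw [Real.rpow_def_of_pos ha, Real.rpow_def_of_pos hb, ← Real.exp_add, ← Real.exp_add]
  refine Real.exp_le_exp.mpr ?_
  nlinarith [h3, h4, h6]


lemma mono_dec {c a b : ℝ} (hc : 0 ≤ c) (hca : c ≤ a) (ha : 0 < a) (hab : a ≤ b) :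
    b ^ c * Real.exp (-b) ≤ a ^ c * Real.exp (-a) := by
  have hb : 0 < b := lt_of_lt_of_le ha hab
  have hlog : Real.log b - Real.log a ≤ b/a - 1 := by
    have := Real.log_le_sub_one_of_pos (x := b/a) (by positivity)
    rwa [Real.log_div (ne_of_gt hb) (ne_of_gt ha)] at this
  have h5 : Real.log b - Real.log a ≤ (b-a)/a := by
    have : b/a - 1 = (b-a)/a := by field_simp
    linarith [hlog.trans_eq this]
  have h6 : c * (Real.log b - Real.log a) ≤ c * ((b-a)/a) := by
    refine mul_le_mul_of_nonneg_left h5 hc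
  have h7 : c * ((b-a)/a) ≤ a * ((b-a)/a) :=
    mul_le_mul_of_nonneg_right hca (div_nonneg (by linarith) ha.le)
  have h8 : a * ((b-a)/a) = b - a := by field_simp
  rw [Real.rpow_def_of_pos ha, Real.rpow_def_of_pos hb, ← Real.exp_add, ← Real.exp_add]
  refine Real.exp_le_exp.mpr ?_
  nlinarith [h6, h7, h8]

lemma stirling_le (m : ℕ) (hm : 1 ≤ m) :
    (Nat.factorial m : ℝ) ≤
      Real.exp 1 * Real.sqrt m * ((m:ℝ)^m * Real.exp (-(m:ℝ))) := by
  have hmpos : (0:ℝ) < m := by exact_mod_cast hm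
  have hd : (0:ℝ) < Real.sqrt (2*m) * ((m:ℝ)/Real.exp 1)^m := by positivity
  have hseq : Stirling.stirlingSeq m ≤ Real.exp 1 / Real.sqrt 2 := by
    obtain ⟨m', rfl⟩ : ∃ m', m = m'+1 := ⟨m-1, (Nat.succ_pred_eq_of_pos hm).symm⟩
    have := Stirling.stirlingSeq'_antitone (Nat.zero_le m')
    simpa [Stirling.stirlingSeq_one] using this
  have hfac : (Nat.factorial m : ℝ) =
      Stirling.stirlingSeq m * (Real.sqrt (2*m) * ((m:ℝ)/Real.exp 1)^m) := by
    rw [Stirling.stirlingSeq]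
    field_simp
  rw [hfac]
  have hb : Stirling.stirlingSeq m * (Real.sqrt (2*m) * ((m:ℝ)/Real.exp 1)^m) ≤
      (Real.exp 1 / Real.sqrt 2) * (Real.sqrt (2*m) * ((m:ℝ)/Real.exp 1)^m) :=
    mul_le_mul_of_nonneg_right hseq hd.le
  refine hb.trans (le_of_eq ?_)
  have h2 : Real.sqrt (2*m) = Real.sqrt 2 * Real.sqrt m := Real.sqrt_mul (by norm_num) _
  have h3 : ((m:ℝ)/Real.exp 1)^m = (m:ℝ)^m * Real.exp (-(m:ℝ)) := by
    rw [div_pow, Real.exp_neg, div_eq_mul_inv]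
    congr 2
    rw [← Real.exp_one_rpow (m:ℝ), ← Real.rpow_natCast (Real.exp 1) m]
  rw [h2, h3]
  have hs2 : Real.sqrt 2 ≠ 0 := by positivity
  field_simp

lemma L2 (m : ℕ) (hm : 1 ≤ m) (lam : ℝ) (h1 : (m:ℝ) ≤ lam) (h2 : lam ≤ (m:ℝ)+1) :
    Real.sqrt (lam/2) ≤ 2 * Real.exp (-lam) * lam^(m+1) / (Nat.factorial m) := by
  have hmpos : (0:ℝ) < m := by exact_mod_cast hm
  have hlam : (0:ℝ) < lam := lt_of_lt_of_le hmpos h1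
  set c : ℝ := (m:ℝ) + 1/2 with hc
  have hc0 : (0:ℝ) ≤ c := by positivity
  -- rpow decompositions
  have hmc : (m:ℝ) ^ c = (m:ℝ)^m * Real.sqrt m := by
    rw [hc, Real.rpow_add hmpos, Real.rpow_natCast, Real.sqrt_eq_rpow]
  have hm1c : ((m:ℝ)+1) ^ c = ((m:ℝ)+1)^(m+1) / Real.sqrt ((m:ℝ)+1) := by
    have hm1 : (0:ℝ) < (m:ℝ)+1 := by positivity
    rw [hc, show (m:ℝ) + 1/2 = ((m+1:ℕ):ℝ) + (-(1/2)) by push_cast; ring,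
      Real.rpow_add hm1, Real.rpow_natCast, Real.rpow_neg hm1.le, Real.sqrt_eq_rpow]
    norm_num [div_eq_mul_inv]
  have key : (Nat.factorial m : ℝ) ≤ 2 * Real.sqrt 2 * (lam ^ c * Real.exp (-lam)) := by
    rcases le_total lam c with hlc | hcl
    · have hK1 : (Nat.factorial m : ℝ) ≤ Real.exp 1 * ((m:ℝ)^c * Real.exp (-(m:ℝ))) := by
        refine (stirling_le m hm).trans (le_of_eq ?_)
        rw [hmc]; ring
      have hmono := mono_inc hmpos h1 hlc
      have : (Nat.factorial m : ℝ) ≤ Real.exp 1 * (lam ^ c * Real.exp (-lam)) :=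
        hK1.trans (mul_le_mul_of_nonneg_left hmono (Real.exp_pos 1).le)
      refine this.trans (mul_le_mul_of_nonneg_right e_le (by positivity))
    · have hm1 : (1:ℕ) ≤ m+1 := by omega
      have hK2 : (Nat.factorial m : ℝ) ≤ Real.exp 1 * (((m:ℝ)+1)^c * Real.exp (-((m:ℝ)+1))) := by
        have hs := stirling_le (m+1) hm1
        have hfs : (Nat.factorial (m+1) : ℝ) = ((m:ℝ)+1) * (Nat.factorial m) := by
          rw [Nat.factorial_succ]; push_cast; ring
        have hm1pos : (0:ℝ) < (m:ℝ)+1 := by positivity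
        rw [hfs] at hs
        push_cast at hs
        have hsq : Real.sqrt ((m:ℝ)+1) * Real.sqrt ((m:ℝ)+1) = (m:ℝ)+1 :=
          Real.mul_self_sqrt hm1pos.le
        rw [hm1c]
        have hsqpos : (0:ℝ) < Real.sqrt ((m:ℝ)+1) := Real.sqrt_pos.mpr hm1pos
        have hrw : Real.exp 1 * (((m:ℝ)+1)^(m+1) / Real.sqrt ((m:ℝ)+1) * Real.exp (-((m:ℝ)+1)))
            = (Real.exp 1 * (((m:ℝ)+1)^(m+1)) * Real.exp (-((m:ℝ)+1))) / Real.sqrt ((m:ℝ)+1) := by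
          ring
        rw [hrw, le_div_iff₀ hsqpos, ← mul_le_mul_iff_right₀ hsqpos]
        calc Real.sqrt ((m:ℝ)+1) * ((Nat.factorial m : ℝ) * Real.sqrt ((m:ℝ)+1))
            = (Real.sqrt ((m:ℝ)+1) * Real.sqrt ((m:ℝ)+1)) * (Nat.factorial m : ℝ) := by ring
          _ = ((m:ℝ)+1) * (Nat.factorial m : ℝ) := by rw [hsq]
          _ ≤ Real.exp 1 * Real.sqrt ((m:ℝ)+1) * (((m:ℝ)+1)^(m+1) * Real.exp (-((m:ℝ)+1))) := hs
          _ = Real.sqrt ((m:ℝ)+1) * (Real.exp 1 * ((m:ℝ)+1)^(m+1) * Real.exp (-((m:ℝ)+1))) := by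
              ring
      have hmono := mono_dec hc0 hcl hlam h2
      have : (Nat.factorial m : ℝ) ≤ Real.exp 1 * (lam ^ c * Real.exp (-lam)) :=
        hK2.trans (mul_le_mul_of_nonneg_left hmono (Real.exp_pos 1).le)
      refine this.trans (mul_le_mul_of_nonneg_right e_le (by positivity))
  -- conclude
  have hfpos : (0:ℝ) < (Nat.factorial m : ℝ) := by exact_mod_cast m.factorial_pos
  rw [le_div_iff₀ hfpos]
  have hchain : Real.sqrt (lam/2) * (Nat.factorial m : ℝ) ≤
      Real.sqrt (lam/2) * (2 * Real.sqrt 2 * (lam ^ c * Real.exp (-lam))) :=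
    mul_le_mul_of_nonneg_left key (Real.sqrt_nonneg _)
  refine hchain.trans (le_of_eq ?_)
  have hsplit : Real.sqrt (lam/2) = Real.sqrt lam / Real.sqrt 2 := Real.sqrt_div hlam.le 2
  have hlc : Real.sqrt lam * lam ^ c = lam ^ (m+1) := by
    rw [Real.sqrt_eq_rpow, ← Real.rpow_add hlam, hc,
      show 1/2 + ((m:ℝ) + 1/2) = ((m+1:ℕ):ℝ) by push_cast; ring, Real.rpow_natCast]
  have hs2 : (0:ℝ) < Real.sqrt 2 := by positivity
  calc Real.sqrt (lam/2) * (2 * Real.sqrt 2 * (lam ^ c * Real.exp (-lam)))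
      = (Real.sqrt lam * lam ^ c) * (2 * Real.exp (-lam)) * (Real.sqrt 2 / Real.sqrt 2) := by
        rw [hsplit]; ring
    _ = (Real.sqrt lam * lam ^ c) * (2 * Real.exp (-lam)) := by
        rw [div_self (ne_of_gt hs2), mul_one]
    _ = 2 * Real.exp (-lam) * lam^(m+1) := by rw [hlc]; ring

end PoissonAux

/-- sharp bounds on `E |q̂ - q|` for `q̂ = X/n`, `X ~ Poisson(nq)`. -/
theorem poisson_mle_bias (n : ℕ) (hn : 0 < n) (q : ℝ) (hq : q ∈ Set.Icc (0 : ℝ) 1) :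
    (q ≤ 1 / n →
      poissonE (n * q) (fun k => |(k : ℝ) / n - q|) = 2 * q * Real.exp (-(n * q))) ∧
    (1 / n ≤ q →
      Real.sqrt (q / (2 * n)) ≤ poissonE (n * q) (fun k => |(k : ℝ) / n - q|) ∧
      poissonE (n * q) (fun k => |(k : ℝ) / n - q|) ≤ Real.sqrt (q / n)) ∧
    (1 / Real.sqrt 2) * min q (Real.sqrt (q / n)) ≤
      poissonE (n * q) (fun k => |(k : ℝ) / n - q|) ∧
    poissonE (n * q) (fun k => |(k : ℝ) / n - q|) ≤ 2 * min q (Real.sqrt (q / n)) := by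
  obtain ⟨hq0, hq1'⟩ := hq
  have hn' : (0:ℝ) < n := by exact_mod_cast hn
  set lam : ℝ := (n:ℝ) * q with hlam
  have hl0 : (0:ℝ) ≤ lam := by positivity
  set m := Nat.floor lam with hm
  obtain ⟨hsum, hform⟩ := PoissonAux.mad lam hl0
  rw [← hm] at hform
  set T := ∑' k : ℕ, poissonPMF lam k * |(k:ℝ) - lam| with hT
  have hE : poissonE lam (fun k => |(k:ℝ)/n - q|) = T / n := by
    unfold poissonE
    have hfun : ∀ k : ℕ, poissonPMF lam k * |(k:ℝ)/n - q| =
        poissonPMF lam k * |(k:ℝ) - lam| / n := by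
      intro k
      have habs : |(k:ℝ)/n - q| = |(k:ℝ) - lam| / n := by
        rw [show (k:ℝ)/n - q = ((k:ℝ) - lam)/n by rw [hlam]; field_simp,
          abs_div, abs_of_pos hn']
      rw [habs]; ring
    rw [tsum_congr hfun, tsum_div_const]
  -- Part 1
  have part1 : q ≤ 1/n → poissonE lam (fun k => |(k:ℝ)/n - q|) = 2 * q * Real.exp (-lam) := by
    intro h
    have hl1 : lam ≤ 1 := by
      rw [hlam]
      calc (n:ℝ)*q ≤ n*(1/n) := mul_le_mul_of_nonneg_left h hn'.le
        _ = 1 := by field_simp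
    rw [hE]
    rcases lt_or_eq_of_le hl1 with hlt | heq1
    · have hm0 : m = 0 := Nat.floor_eq_zero.mpr hlt
      rw [hform, hm0]
      simp only [Nat.factorial_zero, Nat.cast_one, pow_one, zero_add]
      rw [hlam]
      field_simp
    · have hm1 : m = 1 := by rw [hm, heq1]; exact Nat.floor_one
      have hq' : q = 1/n := by
        have h1 : (n:ℝ) * q = 1 := by rw [← hlam]; exact heq1
        field_simp
        linarith
      rw [hform, hm1, heq1, hq']
      norm_num [Nat.factorial_one]
      field_simp
  -- Part 2
  have part2 : 1/n ≤ q →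
      Real.sqrt (q/(2*n)) ≤ poissonE lam (fun k => |(k:ℝ)/n - q|) ∧
      poissonE lam (fun k => |(k:ℝ)/n - q|) ≤ Real.sqrt (q/n) := by
    intro h
    have hl1 : (1:ℝ) ≤ lam := by
      rw [hlam]
      calc (1:ℝ) = n*(1/n) := by field_simp
        _ ≤ n*q := mul_le_mul_of_nonneg_left h hn'.le
    have hm1 : 1 ≤ m := Nat.le_floor (by exact_mod_cast hl1)
    have hmle : (m:ℝ) ≤ lam := Nat.floor_le hl0
    have hlem : lam ≤ (m:ℝ)+1 := (Nat.lt_floor_add_one lam).le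
    have hlow := PoissonAux.L2 m hm1 lam hmle hlem
    have hupp := PoissonAux.upper lam hl0
    constructor
    · rw [hE]
      have h1 : Real.sqrt (q/(2*n)) = Real.sqrt (lam/2) / n := by
        rw [show lam/2 = (q/(2*n)) * (n:ℝ)^2 by rw [hlam]; field_simp,
          Real.sqrt_mul (by positivity), Real.sqrt_sq hn'.le]
        field_simp
      rw [h1, div_le_div_iff_of_pos_right hn', hform]
      refine hlow.trans (le_of_eq (by ring))
    · rw [hE]
      have h2 : Real.sqrt (q/n) = Real.sqrt lam / n := by
        rw [show lam = (q/n) * (n:ℝ)^2 by rw [hlam]; field_simp,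
          Real.sqrt_mul (by positivity), Real.sqrt_sq hn'.le]
        field_simp
      rw [h2, div_le_div_iff_of_pos_right hn']
      exact hupp
  refine ⟨part1, part2, ?_, ?_⟩
  · -- global lower bound
    rcases le_total q (1/n) with hc | hc
    · have hmin : min q (Real.sqrt (q/n)) = q := by
        refine min_eq_left ?_
        rw [Real.le_sqrt hq0 (by positivity)]
        calc q^2 = q*q := sq q
          _ ≤ q*(1/n) := mul_le_mul_of_nonneg_left hc hq0
          _ = q/n := by ring
      rw [hmin, part1 hc]
      have hl1 : lam ≤ 1 := by
        rw [hlam]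
        calc (n:ℝ)*q ≤ n*(1/n) := mul_le_mul_of_nonneg_left hc hn'.le
          _ = 1 := by field_simp
      have he1 : Real.exp (-1) ≤ Real.exp (-lam) := Real.exp_le_exp.mpr (by linarith)
      have hs2 : (0:ℝ) < Real.sqrt 2 := by positivity
      have hkey : 1/Real.sqrt 2 ≤ 2 * Real.exp (-1) := by
        have h1 : 1/(2*Real.sqrt 2) ≤ 1/Real.exp 1 :=
          one_div_le_one_div_of_le (Real.exp_pos 1) PoissonAux.e_le
        have h2 : 1/Real.sqrt 2 = 2 * (1/(2*Real.sqrt 2)) := by field_simp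
        rw [Real.exp_neg, ← one_div, h2]
        linarith
      calc 1/Real.sqrt 2 * q ≤ (2 * Real.exp (-1)) * q := by
            exact mul_le_mul_of_nonneg_right hkey hq0
        _ ≤ (2 * Real.exp (-lam)) * q := by nlinarith [he1, hq0]
        _ = 2 * q * Real.exp (-lam) := by ring
    · have hmin : min q (Real.sqrt (q/n)) = Real.sqrt (q/n) := by
        refine min_eq_right ?_
        calc Real.sqrt (q/n) ≤ Real.sqrt (q^2) := by
              refine Real.sqrt_le_sqrt ?_
              calc q/n = q*(1/n) := by ring
                _ ≤ q*q := mul_le_mul_of_nonneg_left hc hq0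
                _ = q^2 := (sq q).symm
          _ = q := Real.sqrt_sq hq0
      rw [hmin]
      have := (part2 hc).1
      refine le_trans (le_of_eq ?_) this
      rw [show q/(2*n) = (q/n)/2 by ring, Real.sqrt_div (by positivity) 2]
      ring
  · -- global upper bound
    rcases le_total q (1/n) with hc | hc
    · have hmin : min q (Real.sqrt (q/n)) = q := by
        refine min_eq_left ?_
        rw [Real.le_sqrt hq0 (by positivity)]
        calc q^2 = q*q := sq q
          _ ≤ q*(1/n) := mul_le_mul_of_nonneg_left hc hq0
          _ = q/n := by ring
      rw [hmin, part1 hc]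
      have : Real.exp (-lam) ≤ 1 := Real.exp_le_one_iff.mpr (by linarith)
      nlinarith
    · have hmin : min q (Real.sqrt (q/n)) = Real.sqrt (q/n) := by
        refine min_eq_right ?_
        calc Real.sqrt (q/n) ≤ Real.sqrt (q^2) := by
              refine Real.sqrt_le_sqrt ?_
              calc q/n = q*(1/n) := by ring
                _ ≤ q*q := mul_le_mul_of_nonneg_left hc hq0
                _ = q^2 := (sq q).symm
          _ = q := Real.sqrt_sq hq0
      rw [hmin]
      have h2 := (part2 hc).2
      have hnn : 0 ≤ Real.sqrt (q/n) := Real.sqrt_nonneg _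
      linarith
end

section
/- There exist universal constants 0 < c ≤ C and c₀ ≥ 1 such that for all positive integers S and n with n ≥ c₀·S, the maximum likelihood estimator in the Poisson sampling model satisfies c·S/n ≤ sup_{P,Q ∈ M_S} E_P |L_1(P_n,Q) − L_1(P,Q)|² ≤ C·S/n. -/
open scoped BigOperators ENNReal

/-- `P` is a probability vector on `{1,…,S}` (an element of `M_S`). -/
def IsDist {S : ℕ} (p : Fin S → ℝ) : Prop :=
  (∀ i, 0 ≤ p i) ∧ ∑ i, p i = 1

/-- Joint pmf of `S` independent coordinates `X_i ~ Poisson(n p_i)` (Poisson sampling model). -/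
noncomputable def prodPMF {S : ℕ} (n : ℕ) (p : Fin S → ℝ) (x : Fin S → ℕ) : ℝ :=
  ∏ i, poissonPMF (n * p i) (x i)

/-- The `L₁` distance between two vectors. -/
noncomputable def L1dist {S : ℕ} (p q : Fin S → ℝ) : ℝ :=
  ∑ i, |p i - q i|

/-- The mean squared error `E_P (est(X) - L)²` in the Poisson sampling model, valued in `ℝ≥0∞`. -/
noncomputable def risk {S : ℕ} (n : ℕ) (p : Fin S → ℝ) (L : ℝ) (est : (Fin S → ℕ) → ℝ) : ℝ≥0∞ :=
  ∑' x : Fin S → ℕ, ENNReal.ofReal (prodPMF n p x * (est x - L) ^ 2)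

/-- The plug-in (MLE) estimator `L₁(P_n, Q) = Σ_i |X_i/n - q_i|` with `Q` known. -/
noncomputable def mleEst {S : ℕ} (n : ℕ) (q : Fin S → ℝ) (x : Fin S → ℕ) : ℝ :=
  ∑ i, |(x i : ℝ) / n - q i|

namespace MLEAux

lemma poisson_nonneg {lam : ℝ} (h : 0 ≤ lam) (k : ℕ) : 0 ≤ poissonPMF lam k := by
  unfold poissonPMF; positivity

lemma poisson_hasSum {lam : ℝ} (h : 0 ≤ lam) : HasSum (poissonPMF lam) 1 := by
  have h2 := ProbabilityTheory.poissonPMFRealSum lam.toNNReal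
  have : (fun n => ProbabilityTheory.poissonPMFReal lam.toNNReal n) = poissonPMF lam := by
    funext k
    simp [poissonPMF, ProbabilityTheory.poissonPMFReal, Real.coe_toNNReal _ h]
  rw [← this]; exact h2

lemma poisson_hasSum_desc {lam : ℝ} (h : 0 ≤ lam) (r : ℕ) :
    HasSum (fun k => poissonPMF lam k * (k.descFactorial r : ℝ)) (lam ^ r) := by
  have hinj : Function.Injective (fun k : ℕ => k + r) := add_left_injective r
  rw [← hinj.hasSum_iff (f := fun k => poissonPMF lam k * (k.descFactorial r : ℝ))
      (by intro x hx
          have hxr : x < r := by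
            by_contra hge
            exact hx ⟨x - r, by simp; omega⟩
          simp [Nat.descFactorial_eq_zero_iff_lt.mpr hxr])]
  have heq : ((fun k => poissonPMF lam k * (k.descFactorial r : ℝ)) ∘ fun k : ℕ => k + r)
      = fun k => lam ^ r * poissonPMF lam k := by
    funext k
    have hfac : (Nat.factorial k : ℝ) * ((k + r).descFactorial r : ℝ) = (Nat.factorial (k+r) : ℝ) := by
      rw [← Nat.cast_mul]
      congr 1
      have := Nat.factorial_mul_descFactorial (show r ≤ k + r by omega)
      simpa using this
    have hk : (Nat.factorial k : ℝ) ≠ 0 := Nat.cast_ne_zero.mpr (Nat.factorial_ne_zero k)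
    have hkr : (Nat.factorial (k+r) : ℝ) ≠ 0 := Nat.cast_ne_zero.mpr (Nat.factorial_ne_zero _)
    simp only [Function.comp_apply, poissonPMF]
    field_simp
    rw [← hfac]
    ring
  rw [heq]
  simpa using (poisson_hasSum h).mul_left (lam ^ r)


lemma cast_descFactorial (k r : ℕ) :
    (k.descFactorial r : ℝ) = ∏ i ∈ Finset.range r, ((k : ℝ) - i) := by
  induction r with
  | zero => simp
  | succ m ih =>
    rw [Nat.descFactorial_succ, Finset.prod_range_succ, ← ih]
    by_cases hkm : m ≤ k
    · push_cast [hkm]; ring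
    · have h1 : k.descFactorial (m + 1) = 0 :=
        Nat.descFactorial_eq_zero_iff_lt.mpr (by omega)
      have h2 : (k.descFactorial m : ℝ) = 0 := by
        rw [Nat.descFactorial_eq_zero_iff_lt.mpr (by omega)]; simp
      rw [Nat.descFactorial_succ] at h1
      push_cast [h1]
      rw [h2]; ring

lemma poisson_hasSum_desc' {lam : ℝ} (h : 0 ≤ lam) (r : ℕ) :
    HasSum (fun k => poissonPMF lam k * ∏ i ∈ Finset.range r, ((k : ℝ) - i)) (lam ^ r) := by
  have := poisson_hasSum_desc h r
  simpa [cast_descFactorial] using this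

lemma poisson_hasSum_centered2 {lam : ℝ} (h : 0 ≤ lam) :
    HasSum (fun k => poissonPMF lam k * ((k : ℝ) - lam) ^ 2) lam := by
  have h0 := poisson_hasSum_desc' h 0
  have h1 := poisson_hasSum_desc' h 1
  have h2 := poisson_hasSum_desc' h 2
  have key := h2.add (((h1.mul_left (1 - 2 * lam))).add (h0.mul_left (lam ^ 2)))
  have hfun : (fun k => poissonPMF lam k * ((k : ℝ) - lam) ^ 2) = fun k =>
      poissonPMF lam k * ∏ i ∈ Finset.range 2, ((k : ℝ) - i) +
        ((1 - 2 * lam) * (poissonPMF lam k * ∏ i ∈ Finset.range 1, ((k : ℝ) - i)) +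
          lam ^ 2 * (poissonPMF lam k * ∏ i ∈ Finset.range 0, ((k : ℝ) - i))) := by
    funext k
    simp only [Finset.prod_range_succ, Finset.prod_range_zero]
    push_cast
    ring
  rw [hfun]
  convert key using 1
  ring

lemma poisson_hasSum_centered4 {lam : ℝ} (h : 0 ≤ lam) :
    HasSum (fun k => poissonPMF lam k * ((k : ℝ) - lam) ^ 4) (3 * lam ^ 2 + lam) := by
  have h0 := poisson_hasSum_desc' h 0
  have h1 := poisson_hasSum_desc' h 1
  have h2 := poisson_hasSum_desc' h 2
  have h3 := poisson_hasSum_desc' h 3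
  have h4 := poisson_hasSum_desc' h 4
  have key := h4.add ((h3.mul_left (6 - 4 * lam)).add
    ((h2.mul_left (7 - 12 * lam + 6 * lam ^ 2)).add
      ((h1.mul_left (1 - 4 * lam + 6 * lam ^ 2 - 4 * lam ^ 3)).add (h0.mul_left (lam ^ 4)))))
  have hfun : (fun k => poissonPMF lam k * ((k : ℝ) - lam) ^ 4) = fun k =>
      poissonPMF lam k * ∏ i ∈ Finset.range 4, ((k : ℝ) - i) +
        ((6 - 4 * lam) * (poissonPMF lam k * ∏ i ∈ Finset.range 3, ((k : ℝ) - i)) +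
          ((7 - 12 * lam + 6 * lam ^ 2) * (poissonPMF lam k * ∏ i ∈ Finset.range 2, ((k : ℝ) - i)) +
            ((1 - 4 * lam + 6 * lam ^ 2 - 4 * lam ^ 3) *
                (poissonPMF lam k * ∏ i ∈ Finset.range 1, ((k : ℝ) - i)) +
              lam ^ 4 * (poissonPMF lam k * ∏ i ∈ Finset.range 0, ((k : ℝ) - i))))) := by
    funext k
    simp only [Finset.prod_range_succ, Finset.prod_range_zero]
    push_cast
    ring
  rw [hfun]
  convert key using 1
  ring


lemma tsum_cauchy_schwarz {f g : ℕ → ℝ} (hf : ∀ k, 0 ≤ f k) (hg : ∀ k, 0 ≤ g k)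
    (hf2 : Summable fun k => f k ^ 2) (hg2 : Summable fun k => g k ^ 2) :
    Summable (fun k => f k * g k) ∧
      (∑' k, f k * g k) ^ 2 ≤ (∑' k, f k ^ 2) * ∑' k, g k ^ 2 := by
  have hs : Summable (fun k => f k * g k) := by
    refine Summable.of_nonneg_of_le (fun k => mul_nonneg (hf k) (hg k))
      (fun k => ?_) ((hf2.add hg2).div_const 2)
    have := two_mul_le_add_sq (f k) (g k)
    linarith
  refine ⟨hs, ?_⟩
  set A := ∑' k, f k ^ 2 with hA
  set B := ∑' k, g k ^ 2 with hB
  have hA0 : 0 ≤ A := tsum_nonneg fun k => sq_nonneg _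
  have hB0 : 0 ≤ B := tsum_nonneg fun k => sq_nonneg _
  have hle : ∑' k, f k * g k ≤ Real.sqrt (A * B) := by
    refine Summable.tsum_le_of_sum_le hs fun s => ?_
    refine Real.le_sqrt_of_sq_le ?_
    calc (∑ k ∈ s, f k * g k) ^ 2 ≤ (∑ k ∈ s, f k ^ 2) * ∑ k ∈ s, g k ^ 2 :=
          Finset.sum_mul_sq_le_sq_mul_sq s f g
      _ ≤ A * B := by
          refine mul_le_mul (Summable.sum_le_tsum s (fun k _ => sq_nonneg _) hf2)
            (Summable.sum_le_tsum s (fun k _ => sq_nonneg _) hg2)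
            (Finset.sum_nonneg fun k _ => sq_nonneg _) hA0
  calc (∑' k, f k * g k) ^ 2 ≤ Real.sqrt (A * B) ^ 2 := by
        refine pow_le_pow_left₀ (tsum_nonneg fun k => mul_nonneg (hf k) (hg k)) hle 2
    _ = A * B := Real.sq_sqrt (mul_nonneg hA0 hB0)

lemma poisson_summable_abs1 {lam : ℝ} (h : 0 ≤ lam) :
    Summable (fun k => poissonPMF lam k * |(k : ℝ) - lam|) := by
  refine Summable.of_nonneg_of_le
    (fun k => mul_nonneg (poisson_nonneg h k) (abs_nonneg _)) (fun k => ?_)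
    (((poisson_hasSum h).summable.add (poisson_hasSum_centered2 h).summable).div_const 2)
  have h1 : |(k : ℝ) - lam| ≤ (1 + ((k : ℝ) - lam) ^ 2) / 2 := by
    nlinarith [sq_nonneg (|(k : ℝ) - lam| - 1), sq_abs ((k : ℝ) - lam), abs_nonneg ((k:ℝ) - lam)]
  have := mul_le_mul_of_nonneg_left h1 (poisson_nonneg h k)
  linarith

lemma poisson_summable_abs3 {lam : ℝ} (h : 0 ≤ lam) :
    Summable (fun k => poissonPMF lam k * |(k : ℝ) - lam| ^ 3) := by
  refine Summable.of_nonneg_of_le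
    (fun k => mul_nonneg (poisson_nonneg h k) (by positivity)) (fun k => ?_)
    (((poisson_hasSum_centered2 h).summable.add (poisson_hasSum_centered4 h).summable).div_const 2)
  have h1 : |(k : ℝ) - lam| ^ 3 ≤ (((k : ℝ) - lam) ^ 2 + ((k : ℝ) - lam) ^ 4) / 2 := by
    set a := |(k : ℝ) - lam| with ha
    have ha0 : 0 ≤ a := abs_nonneg _
    have h2 : ((k : ℝ) - lam) ^ 2 = a ^ 2 := (sq_abs _).symm
    have h4 : ((k : ℝ) - lam) ^ 4 = a ^ 4 := by
      rw [show (4 : ℕ) = 2 * 2 from rfl, pow_mul, pow_mul, h2]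
    rw [h2, h4]
    nlinarith [sq_nonneg (a ^ 2 - a), sq_nonneg (a - 1)]
  have := mul_le_mul_of_nonneg_left h1 (poisson_nonneg h k)
  linarith

/-- Mean absolute deviation of Poisson is at least `√lam / 2` for `lam ≥ 1`. -/
lemma poisson_mad_ge {lam : ℝ} (h1 : 1 ≤ lam) :
    Real.sqrt lam / 2 ≤ ∑' k, poissonPMF lam k * |(k : ℝ) - lam| := by
  have h0 : (0 : ℝ) ≤ lam := le_trans zero_le_one h1
  have hpos : 0 < lam := lt_of_lt_of_le zero_lt_one h1
  set A1 := ∑' k, poissonPMF lam k * |(k : ℝ) - lam| with hA1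
  set A3 := ∑' k, poissonPMF lam k * |(k : ℝ) - lam| ^ 3 with hA3
  have hA1nn : 0 ≤ A1 := tsum_nonneg fun k => mul_nonneg (poisson_nonneg h0 k) (abs_nonneg _)
  have hA3nn : 0 ≤ A3 := tsum_nonneg fun k => mul_nonneg (poisson_nonneg h0 k) (by positivity)
  -- CS 1 : lam^2 ≤ A1 * A3
  have cs1 : lam ^ 2 ≤ A1 * A3 := by
    set f := fun k => Real.sqrt (poissonPMF lam k * |(k : ℝ) - lam|) with hf
    set g := fun k => Real.sqrt (poissonPMF lam k * |(k : ℝ) - lam| ^ 3) with hg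
    have hf2 : (fun k => f k ^ 2) = fun k => poissonPMF lam k * |(k : ℝ) - lam| := by
      funext k
      simp only [hf]
      exact Real.sq_sqrt (mul_nonneg (poisson_nonneg h0 k) (abs_nonneg _))
    have hg2 : (fun k => g k ^ 2) = fun k => poissonPMF lam k * |(k : ℝ) - lam| ^ 3 := by
      funext k
      simp only [hg]
      exact Real.sq_sqrt (mul_nonneg (poisson_nonneg h0 k) (by positivity))
    have hfg : (fun k => f k * g k) = fun k => poissonPMF lam k * ((k : ℝ) - lam) ^ 2 := by
      funext k
      simp only [hf, hg]
      rw [← Real.sqrt_mul (mul_nonneg (poisson_nonneg h0 k) (abs_nonneg _))]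
      have habs : |(k : ℝ) - lam| ^ 4 = (((k : ℝ) - lam) ^ 2) ^ 2 := by
        rw [← sq_abs ((k : ℝ) - lam)]; ring
      have hexp : poissonPMF lam k * |(k : ℝ) - lam| * (poissonPMF lam k * |(k : ℝ) - lam| ^ 3)
          = poissonPMF lam k ^ 2 * |(k : ℝ) - lam| ^ 4 := by ring
      rw [hexp, habs, show poissonPMF lam k ^ 2 * ((((k : ℝ) - lam) ^ 2) ^ 2)
          = (poissonPMF lam k * ((k : ℝ) - lam) ^ 2) ^ 2 by ring,
        Real.sqrt_sq (mul_nonneg (poisson_nonneg h0 k) (sq_nonneg _))]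
    have := tsum_cauchy_schwarz (f := f) (g := g) (fun k => Real.sqrt_nonneg _)
      (fun k => Real.sqrt_nonneg _) (by rw [hf2]; exact poisson_summable_abs1 h0)
      (by rw [hg2]; exact poisson_summable_abs3 h0)
    rcases this with ⟨-, hineq⟩
    rw [hfg, hf2, hg2] at hineq
    rwa [(poisson_hasSum_centered2 h0).tsum_eq] at hineq
  -- CS 2 : A3^2 ≤ lam * (3*lam^2 + lam)
  have cs2 : A3 ^ 2 ≤ lam * (3 * lam ^ 2 + lam) := by
    set f := fun k => Real.sqrt (poissonPMF lam k) * |(k : ℝ) - lam| with hf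
    set g := fun k => Real.sqrt (poissonPMF lam k) * ((k : ℝ) - lam) ^ 2 with hg
    have hsq : ∀ k, Real.sqrt (poissonPMF lam k) ^ 2 = poissonPMF lam k :=
      fun k => Real.sq_sqrt (poisson_nonneg h0 k)
    have hf2 : (fun k => f k ^ 2) = fun k => poissonPMF lam k * ((k : ℝ) - lam) ^ 2 := by
      funext k; simp only [hf]; rw [mul_pow, hsq k, sq_abs]
    have hg2 : (fun k => g k ^ 2) = fun k => poissonPMF lam k * ((k : ℝ) - lam) ^ 4 := by
      funext k; simp only [hg]; rw [mul_pow, hsq k]; ring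
    have hfg : (fun k => f k * g k) = fun k => poissonPMF lam k * |(k : ℝ) - lam| ^ 3 := by
      funext k
      simp only [hf, hg]
      have hms : Real.sqrt (poissonPMF lam k) * Real.sqrt (poissonPMF lam k)
          = poissonPMF lam k := Real.mul_self_sqrt (poisson_nonneg h0 k)
      calc Real.sqrt (poissonPMF lam k) * |(k : ℝ) - lam| *
            (Real.sqrt (poissonPMF lam k) * ((k : ℝ) - lam) ^ 2)
          = Real.sqrt (poissonPMF lam k) * Real.sqrt (poissonPMF lam k) *
            (|(k : ℝ) - lam| * ((k : ℝ) - lam) ^ 2) := by ring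
        _ = poissonPMF lam k * |(k : ℝ) - lam| ^ 3 := by
            rw [hms, ← sq_abs ((k : ℝ) - lam)]; ring
    have := tsum_cauchy_schwarz (f := f) (g := g)
      (fun k => mul_nonneg (Real.sqrt_nonneg _) (abs_nonneg _))
      (fun k => mul_nonneg (Real.sqrt_nonneg _) (sq_nonneg _))
      (by rw [hf2]; exact (poisson_hasSum_centered2 h0).summable)
      (by rw [hg2]; exact (poisson_hasSum_centered4 h0).summable)
    rcases this with ⟨-, hineq⟩
    rw [hfg, hf2, hg2, (poisson_hasSum_centered2 h0).tsum_eq,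
      (poisson_hasSum_centered4 h0).tsum_eq] at hineq
    exact hineq
  -- conclude
  have hB0 : (0 : ℝ) ≤ 2 * lam * Real.sqrt lam := by positivity
  have hA3le : A3 ≤ 2 * lam * Real.sqrt lam := by
    have h4 : lam * (3 * lam ^ 2 + lam) ≤ (2 * lam * Real.sqrt lam) ^ 2 := by
      have hss : Real.sqrt lam ^ 2 = lam := Real.sq_sqrt h0
      nlinarith [hss, sq_nonneg lam, h1, hpos]
    calc A3 = Real.sqrt (A3 ^ 2) := (Real.sqrt_sq hA3nn).symm
      _ ≤ Real.sqrt ((2 * lam * Real.sqrt lam) ^ 2) :=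
          Real.sqrt_le_sqrt (le_trans cs2 h4)
      _ = 2 * lam * Real.sqrt lam := Real.sqrt_sq hB0
  have hsl : 0 < Real.sqrt lam := Real.sqrt_pos.mpr hpos
  have hstep : lam ^ 2 ≤ A1 * (2 * lam * Real.sqrt lam) := by
    calc lam ^ 2 ≤ A1 * A3 := cs1
      _ ≤ A1 * (2 * lam * Real.sqrt lam) := by
          exact mul_le_mul_of_nonneg_left hA3le hA1nn
  have hls : lam ^ 2 = (Real.sqrt lam / 2) * (2 * lam * Real.sqrt lam) := by
    have : Real.sqrt lam * Real.sqrt lam = lam := Real.mul_self_sqrt h0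
    nlinarith [this]
  have hpos2 : 0 < 2 * lam * Real.sqrt lam := by positivity
  refine le_of_mul_le_mul_right ?_ hpos2
  calc Real.sqrt lam / 2 * (2 * lam * Real.sqrt lam) = lam ^ 2 := hls.symm
    _ ≤ A1 * (2 * lam * Real.sqrt lam) := hstep


/-- tsum over a pi type of a product factorizes, in `ℝ≥0∞`. -/
lemma tsum_pi_prod : ∀ {S : ℕ} (g : Fin S → ℕ → ℝ≥0∞),
    ∑' x : Fin S → ℕ, ∏ i, g i (x i) = ∏ i, ∑' k, g i k := by
  intro S
  induction S with
  | zero =>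
    intro g
    simp only [Finset.univ_eq_empty, Finset.prod_empty]
    exact tsum_eq_single (fun i => i.elim0) (fun b hb => absurd (funext fun i => i.elim0) hb)
  | succ m ih =>
    intro g
    rw [← (Fin.consEquiv (fun _ : Fin (m + 1) => ℕ)).tsum_eq]
    have key : ∀ y : ℕ × (Fin m → ℕ), (∏ i, g i (Fin.consEquiv (fun _ => ℕ) y i))
        = g 0 y.1 * ∏ i : Fin m, g i.succ (y.2 i) := by
      intro y
      have he : ⇑(Fin.consEquiv (fun _ : Fin (m + 1) => ℕ)) y = Fin.cons y.1 y.2 := rfl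
      rw [Fin.prod_univ_succ, he, Fin.cons_zero]
      simp only [Fin.cons_succ]
    calc ∑' y : ℕ × (Fin m → ℕ), ∏ i, g i (Fin.consEquiv (fun _ => ℕ) y i)
        = ∑' y : ℕ × (Fin m → ℕ), g 0 y.1 * ∏ i : Fin m, g i.succ (y.2 i) := by
          exact tsum_congr key
      _ = ∑' (k : ℕ) (z : Fin m → ℕ), g 0 k * ∏ i : Fin m, g i.succ (z i) :=
          ENNReal.tsum_prod'
      _ = ∑' k : ℕ, g 0 k * ∑' z : Fin m → ℕ, ∏ i : Fin m, g i.succ (z i) := by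
          exact tsum_congr fun k => ENNReal.tsum_mul_left
      _ = (∑' k : ℕ, g 0 k) * ∑' z : Fin m → ℕ, ∏ i : Fin m, g i.succ (z i) :=
          ENNReal.tsum_mul_right
      _ = ∏ i : Fin (m + 1), ∑' k, g i k := by
          rw [ih fun i => g i.succ, Fin.prod_univ_succ]


lemma ofReal_prod {ι : Type*} (s : Finset ι) (f : ι → ℝ) (hf : ∀ i ∈ s, 0 ≤ f i) :
    ENNReal.ofReal (∏ i ∈ s, f i) = ∏ i ∈ s, ENNReal.ofReal (f i) := by
  classical
  induction s using Finset.induction_on with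
  | empty => simp
  | @insert a s ha ih =>
    rw [Finset.prod_insert ha, Finset.prod_insert ha,
      ENNReal.ofReal_mul (hf a (Finset.mem_insert_self a s)),
      ih fun i hi => hf i (Finset.mem_insert_of_mem hi)]

lemma prod_eq_mul_of_ne {M : Type*} [CommMonoid M] {S : ℕ} (F : Fin S → M) (i j : Fin S)
    (hij : i ≠ j) (hF : ∀ t, t ≠ i → t ≠ j → F t = 1) : ∏ t, F t = F i * F j := by
  classical
  rw [← Finset.mul_prod_erase Finset.univ F (Finset.mem_univ i)]
  have hj : j ∈ Finset.univ.erase i := Finset.mem_erase.mpr ⟨hij.symm, Finset.mem_univ j⟩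
  rw [← Finset.mul_prod_erase _ F hj]
  have : ∏ t ∈ (Finset.univ.erase i).erase j, F t = 1 := by
    refine Finset.prod_eq_one fun t ht => ?_
    rw [Finset.mem_erase, Finset.mem_erase] at ht
    exact hF t ht.2.1 ht.1
  rw [this, mul_one]

/-- Master expectation lemma: `E ∏ h_t(X_t) = ∏ E h_t(X_t)`. -/
lemma exp_master {S n : ℕ} {p : Fin S → ℝ} (hp0 : ∀ t, 0 ≤ p t) (h : Fin S → ℕ → ℝ)
    (hh : ∀ t k, 0 ≤ h t k) (a : Fin S → ℝ)
    (ha : ∀ t, HasSum (fun k => poissonPMF (n * p t) k * h t k) (a t)) :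
    ∑' x : Fin S → ℕ, ENNReal.ofReal (prodPMF n p x * ∏ t, h t (x t))
      = ENNReal.ofReal (∏ t, a t) := by
  have hnn : ∀ t, 0 ≤ (n : ℝ) * p t := fun t => mul_nonneg (Nat.cast_nonneg n) (hp0 t)
  have ha0 : ∀ t, 0 ≤ a t := fun t => (ha t).tsum_eq ▸
    tsum_nonneg fun k => mul_nonneg (poisson_nonneg (hnn t) k) (hh t k)
  have hpoint : ∀ x : Fin S → ℕ, ENNReal.ofReal (prodPMF n p x * ∏ t, h t (x t))
      = ∏ t, ENNReal.ofReal (poissonPMF (n * p t) (x t) * h t (x t)) := by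
    intro x
    rw [prodPMF, ← Finset.prod_mul_distrib,
      ofReal_prod _ _ fun t _ => mul_nonneg (poisson_nonneg (hnn t) _) (hh t _)]
  rw [tsum_congr hpoint,
    tsum_pi_prod fun t k => ENNReal.ofReal (poissonPMF (n * p t) k * h t k),
    ofReal_prod _ _ fun t _ => ha0 t]
  refine Finset.prod_congr rfl fun t _ => ?_
  rw [← (ha t).tsum_eq,
    ENNReal.ofReal_tsum_of_nonneg (fun k => mul_nonneg (poisson_nonneg (hnn t) k) (hh t k))
      (ha t).summable]

/-- Expectation of a function of a single coordinate. -/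
lemma exp_single {S n : ℕ} {p : Fin S → ℝ} (hp0 : ∀ t, 0 ≤ p t) (i : Fin S)
    (h : ℕ → ℝ) (hh : ∀ k, 0 ≤ h k) {a : ℝ}
    (ha : HasSum (fun k => poissonPMF (n * p i) k * h k) a) :
    ∑' x : Fin S → ℕ, ENNReal.ofReal (prodPMF n p x * h (x i)) = ENNReal.ofReal a := by
  classical
  have hnn : ∀ t, 0 ≤ (n : ℝ) * p t := fun t => mul_nonneg (Nat.cast_nonneg n) (hp0 t)
  have key := exp_master hp0 (fun t => if t = i then h else fun _ => 1)
    (fun t k => by split <;> simp [hh k]) (fun t => if t = i then a else 1)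
    (fun t => by
      rcases eq_or_ne t i with rfl | ht
      · simpa using ha
      · simpa [ht] using poisson_hasSum (hnn t)) (n := n)
  have h1 : ∀ x : Fin S → ℕ,
      (∏ t, (if t = i then h else fun _ => (1 : ℝ)) (x t)) = h (x i) := by
    intro x
    rw [show (fun t => (if t = i then h else fun _ => (1:ℝ)) (x t))
        = fun t => if t = i then h (x t) else 1 by funext t; split <;> rfl]
    rw [Finset.prod_ite_eq' Finset.univ i (fun t => h (x t))]
    simp
  have h2 : (∏ t, if t = i then a else 1) = a := by
    rw [Finset.prod_ite_eq' Finset.univ i (fun _ => a)]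
    simp
  calc ∑' x : Fin S → ℕ, ENNReal.ofReal (prodPMF n p x * h (x i))
      = ∑' x : Fin S → ℕ, ENNReal.ofReal (prodPMF n p x *
          ∏ t, (fun t => if t = i then h else fun _ => (1 : ℝ)) t (x t)) :=
        tsum_congr fun x => by rw [show (∏ t, (fun t => if t = i then h else fun _ => (1 : ℝ)) t
          (x t)) = h (x i) from h1 x]
    _ = ENNReal.ofReal (∏ t, (fun t => if t = i then a else 1) t) := key
    _ = ENNReal.ofReal a := by rw [show (∏ t, (fun t => if t = i then a else 1) t) = a from h2]

/-- Expectation of a product of functions of two distinct coordinates. -/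
lemma exp_pair {S n : ℕ} {p : Fin S → ℝ} (hp0 : ∀ t, 0 ≤ p t) {i j : Fin S} (hij : i ≠ j)
    (h1 h2 : ℕ → ℝ) (hh1 : ∀ k, 0 ≤ h1 k) (hh2 : ∀ k, 0 ≤ h2 k) {a b : ℝ}
    (ha : HasSum (fun k => poissonPMF (n * p i) k * h1 k) a)
    (hb : HasSum (fun k => poissonPMF (n * p j) k * h2 k) b) :
    ∑' x : Fin S → ℕ, ENNReal.ofReal (prodPMF n p x * (h1 (x i) * h2 (x j)))
      = ENNReal.ofReal (a * b) := by
  classical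
  have hnn : ∀ t, 0 ≤ (n : ℝ) * p t := fun t => mul_nonneg (Nat.cast_nonneg n) (hp0 t)
  have key := exp_master hp0 (fun t => if t = i then h1 else if t = j then h2 else fun _ => 1)
    (fun t k => by
      by_cases hti : t = i
      · simp only [if_pos hti]; exact hh1 k
      · by_cases htj : t = j
        · simp only [if_neg hti, if_pos htj]; exact hh2 k
        · simp [hti, htj])
    (fun t => if t = i then a else if t = j then b else 1)
    (fun t => by
      rcases eq_or_ne t i with rfl | hti
      · simpa using ha
      · rcases eq_or_ne t j with rfl | htj
        · simpa [hij.symm] using hb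
        · simpa [hti, htj] using poisson_hasSum (hnn t)) (n := n)
  have h1' : ∀ x : Fin S → ℕ,
      (∏ t, (if t = i then h1 else if t = j then h2 else fun _ => (1 : ℝ)) (x t))
        = h1 (x i) * h2 (x j) := by
    intro x
    rw [prod_eq_mul_of_ne _ i j hij (fun t hti htj => by simp [hti, htj])]
    rw [if_pos rfl, if_neg (Ne.symm hij), if_pos rfl]
  have h2' : (∏ t, if t = i then a else if t = j then b else 1) = a * b := by
    rw [prod_eq_mul_of_ne _ i j hij (fun t hti htj => by simp [hti, htj])]
    rw [if_pos rfl, if_neg (Ne.symm hij), if_pos rfl]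
  calc ∑' x : Fin S → ℕ, ENNReal.ofReal (prodPMF n p x * (h1 (x i) * h2 (x j)))
      = ∑' x : Fin S → ℕ, ENNReal.ofReal (prodPMF n p x *
          ∏ t, (fun t => if t = i then h1 else if t = j then h2 else fun _ => (1 : ℝ)) t (x t)) :=
        tsum_congr fun x => by
          rw [show (∏ t, (fun t => if t = i then h1 else if t = j then h2 else fun _ => (1 : ℝ)) t
            (x t)) = h1 (x i) * h2 (x j) from h1' x]
    _ = ENNReal.ofReal (∏ t, (fun t => if t = i then a else if t = j then b else 1) t) := key
    _ = ENNReal.ofReal (a * b) := by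
        rw [show (∏ t, (fun t => if t = i then a else if t = j then b else 1) t) = a * b from h2']


lemma pointwise_sq_le {S n : ℕ} (p q : Fin S → ℝ) (x : Fin S → ℕ) :
    (mleEst n q x - L1dist p q) ^ 2 ≤ (S : ℝ) * ∑ i, ((x i : ℝ) / n - p i) ^ 2 := by
  have h1 : |mleEst n q x - L1dist p q| ≤ ∑ i, |(x i : ℝ) / n - p i| := by
    rw [mleEst, L1dist, ← Finset.sum_sub_distrib]
    refine (Finset.abs_sum_le_sum_abs _ _).trans (Finset.sum_le_sum fun i _ => ?_)
    have h2 := abs_abs_sub_abs_le_abs_sub ((x i : ℝ) / n - q i) (p i - q i)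
    have he : ((x i : ℝ) / n - q i) - (p i - q i) = (x i : ℝ) / n - p i := by ring
    rwa [he] at h2
  calc (mleEst n q x - L1dist p q) ^ 2 = |mleEst n q x - L1dist p q| ^ 2 := (sq_abs _).symm
    _ ≤ (∑ i, |(x i : ℝ) / n - p i|) ^ 2 := by
        refine pow_le_pow_left₀ (abs_nonneg _) h1 2
    _ ≤ ((Finset.univ : Finset (Fin S)).card : ℝ) * ∑ i, |(x i : ℝ) / n - p i| ^ 2 :=
        sq_sum_le_card_mul_sum_sq
    _ = (S : ℝ) * ∑ i, ((x i : ℝ) / n - p i) ^ 2 := by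
        simp [sq_abs, Finset.card_univ]

lemma hasSum_sq_diff {n : ℕ} (hn : 0 < n) {c : ℝ} (hc : 0 ≤ c) :
    HasSum (fun k => poissonPMF (n * c) k * ((k : ℝ) / n - c) ^ 2) (c / n) := by
  have h0 : (0 : ℝ) ≤ n * c := mul_nonneg (Nat.cast_nonneg n) hc
  have hne : (n : ℝ) ≠ 0 := Nat.cast_ne_zero.mpr hn.ne'
  have h2 := (poisson_hasSum_centered2 h0).mul_left ((1 : ℝ) / n ^ 2)
  have heq : (fun k => 1 / (n : ℝ) ^ 2 * (poissonPMF (n * c) k * ((k : ℝ) - n * c) ^ 2))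
      = fun k => poissonPMF (n * c) k * ((k : ℝ) / n - c) ^ 2 := by
    funext k
    field_simp
    try ring
  have hval : 1 / (n : ℝ) ^ 2 * (n * c) = c / n := by
    field_simp
    try ring
  rw [heq, hval] at h2
  exact h2

lemma prodPMF_nonneg {S n : ℕ} {p : Fin S → ℝ} (hp0 : ∀ i, 0 ≤ p i) (x : Fin S → ℕ) :
    0 ≤ prodPMF n p x :=
  Finset.prod_nonneg fun i _ =>
    poisson_nonneg (mul_nonneg (Nat.cast_nonneg n) (hp0 i)) _

lemma risk_le {S n : ℕ} (hn : 0 < n) {p q : Fin S → ℝ} (hp : IsDist p) (hq : IsDist q) :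
    risk n p (L1dist p q) (mleEst n q) ≤ ENNReal.ofReal ((S : ℝ) / n) := by
  have hne : (n : ℝ) ≠ 0 := Nat.cast_ne_zero.mpr hn.ne'
  calc risk n p (L1dist p q) (mleEst n q)
      ≤ ∑' x : Fin S → ℕ, ENNReal.ofReal (prodPMF n p x *
          ((S : ℝ) * ∑ i, ((x i : ℝ) / n - p i) ^ 2)) := by
        rw [risk]
        refine ENNReal.tsum_le_tsum fun x => ENNReal.ofReal_le_ofReal ?_
        exact mul_le_mul_of_nonneg_left (pointwise_sq_le p q x) (prodPMF_nonneg hp.1 x)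
    _ = ∑' x : Fin S → ℕ, ∑ i, ENNReal.ofReal (prodPMF n p x *
          ((S : ℝ) * ((x i : ℝ) / n - p i) ^ 2)) := by
        refine tsum_congr fun x => ?_
        rw [show prodPMF n p x * ((S : ℝ) * ∑ i, ((x i : ℝ) / n - p i) ^ 2)
            = ∑ i, prodPMF n p x * ((S : ℝ) * ((x i : ℝ) / n - p i) ^ 2) by
          rw [Finset.mul_sum, Finset.mul_sum]]
        refine ENNReal.ofReal_sum_of_nonneg fun i _ => ?_
        exact mul_nonneg (prodPMF_nonneg (n := n) hp.1 x) (by positivity)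
    _ = ∑ i, ∑' x : Fin S → ℕ, ENNReal.ofReal (prodPMF n p x *
          ((S : ℝ) * ((x i : ℝ) / n - p i) ^ 2)) :=
        Summable.tsum_finsetSum fun i _ => ENNReal.summable
    _ = ∑ i, ENNReal.ofReal ((S : ℝ) * (p i / n)) := by
        refine Finset.sum_congr rfl fun i _ => ?_
        refine exp_single hp.1 i (fun k => (S : ℝ) * ((k : ℝ) / n - p i) ^ 2)
          (fun k => by positivity) ?_
        have h2 := (hasSum_sq_diff hn (hp.1 i)).mul_left (S : ℝ)
        have heq : (fun k => (S : ℝ) * (poissonPMF (n * p i) k * ((k : ℝ) / n - p i) ^ 2))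
            = fun k => poissonPMF (n * p i) k * ((S : ℝ) * ((k : ℝ) / n - p i) ^ 2) := by
          funext k; ring
        rwa [heq] at h2
    _ = ENNReal.ofReal ((S : ℝ) / n) := by
        rw [← ENNReal.ofReal_sum_of_nonneg fun i _ => mul_nonneg (Nat.cast_nonneg S)
          (div_nonneg (hp.1 i) (Nat.cast_nonneg n))]
        congr 1
        rw [← Finset.mul_sum, show (∑ i, p i / (n : ℝ)) = (∑ i, p i) / n from
          (Finset.sum_div _ _ _).symm, hp.2]
        field_simp


lemma uniform_isDist {S : ℕ} (hS : 0 < S) : IsDist (fun _ : Fin S => (S : ℝ)⁻¹) := by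
  constructor
  · intro i
    positivity
  · rw [Finset.sum_const, Finset.card_univ, Fintype.card_fin, nsmul_eq_mul]
    field_simp

lemma risk_uniform_ge {S n : ℕ} (hS : 0 < S) (hn : 0 < n) (hSn : (S : ℝ) ≤ n) :
    ENNReal.ofReal (1 / 8 * S / n) ≤
      risk n (fun _ : Fin S => (S : ℝ)⁻¹)
        (L1dist (fun _ : Fin S => (S : ℝ)⁻¹) (fun _ : Fin S => (S : ℝ)⁻¹))
        (mleEst n (fun _ : Fin S => (S : ℝ)⁻¹)) := by
  have hSR : (0 : ℝ) < S := Nat.cast_pos.mpr hS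
  have hnR : (0 : ℝ) < n := Nat.cast_pos.mpr hn
  have hne : (n : ℝ) ≠ 0 := hnR.ne'
  set u : Fin S → ℝ := fun _ => (S : ℝ)⁻¹ with hu
  have hu0 : ∀ i, 0 ≤ u i := fun i => by rw [hu]; positivity
  set lam : ℝ := (n : ℝ) * (S : ℝ)⁻¹ with hlam
  have hlam0 : 0 ≤ lam := by positivity
  have hlam1 : 1 ≤ lam := by
    rw [hlam, ← div_eq_mul_inv, le_div_iff₀ hSR]
    linarith
  have hLzero : L1dist u u = 0 := by simp [L1dist]
  -- the mean absolute deviation of one coordinate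
  set A1 : ℝ := ∑' k, poissonPMF lam k * |(k : ℝ) - lam| with hA1def
  have hA1 : Real.sqrt lam / 2 ≤ A1 := poisson_mad_ge hlam1
  have hA1nn : 0 ≤ A1 := le_trans (by positivity) hA1
  have hEsum : ∀ i : Fin S,
      HasSum (fun k => poissonPMF ((n : ℝ) * u i) k * |(k : ℝ) / n - (S : ℝ)⁻¹|) (A1 / n) := by
    intro i
    have h1 := ((poisson_summable_abs1 hlam0).hasSum).div_const (n : ℝ)
    rw [← hA1def] at h1
    have heq : (fun k => poissonPMF lam k * |(k : ℝ) - lam| / n)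
        = fun k => poissonPMF ((n : ℝ) * u i) k * |(k : ℝ) / n - (S : ℝ)⁻¹| := by
      funext k
      have hd : ((k : ℝ) - lam) / n = (k : ℝ) / n - (S : ℝ)⁻¹ := by
        rw [sub_div, hlam, mul_comm, mul_div_assoc, div_self hne, mul_one]
      have habs : |(k : ℝ) / n - (S : ℝ)⁻¹| = |(k : ℝ) - lam| / n := by
        rw [← hd, abs_div, abs_of_pos hnR]
      rw [habs, hu]
      ring
    rwa [heq] at h1
  -- dispatch on S = 1 or S ≥ 2
  rcases eq_or_lt_of_le (Nat.one_le_iff_ne_zero.mpr hS.ne') with hS1 | hS2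
  · -- S = 1 : the risk is exactly 1/n
    have hS1' : S = 1 := hS1.symm
    subst hS1'
    have hpoint : ∀ x : Fin 1 → ℕ,
        prodPMF n u x * (mleEst n u x - L1dist u u) ^ 2
          = prodPMF n u x * ((x 0 : ℝ) / n - ((1 : ℕ) : ℝ)⁻¹ : ℝ) ^ 2 := by
      intro x
      rw [hLzero, sub_zero, mleEst, Fin.sum_univ_one, sq_abs]
    have hrisk : risk n u (L1dist u u) (mleEst n u) = ENNReal.ofReal (u 0 / n) := by
      rw [risk]
      rw [tsum_congr fun x => by rw [hpoint x]]
      exact exp_single hu0 0 (fun k => ((k : ℝ) / n - u 0) ^ 2) (fun k => sq_nonneg _)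
        (hasSum_sq_diff hn (hu0 0))
    rw [hrisk]
    refine ENNReal.ofReal_le_ofReal ?_
    have hu01 : u 0 = 1 := by rw [hu]; norm_num
    rw [hu01, Nat.cast_one]
    have hinv : (0 : ℝ) ≤ (n : ℝ)⁻¹ := by positivity
    rw [div_eq_mul_inv, div_eq_mul_inv, one_div]
    linarith [hinv]
  · -- S ≥ 2
    have hpt : ∀ x : Fin S → ℕ,
        (∑ i, ∑ j ∈ Finset.univ.erase i,
          |(x i : ℝ) / n - u i| * |(x j : ℝ) / n - u j|)
          ≤ (mleEst n u x - L1dist u u) ^ 2 := by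
      intro x
      rw [hLzero, sub_zero, mleEst, sq, Finset.sum_mul_sum]
      refine Finset.sum_le_sum fun i _ => ?_
      refine Finset.sum_le_sum_of_subset_of_nonneg (Finset.erase_subset i Finset.univ)
        fun j _ _ => mul_nonneg (abs_nonneg _) (abs_nonneg _)
    have key : ∀ i : Fin S, ∀ j ∈ Finset.univ.erase i,
        ∑' x : Fin S → ℕ, ENNReal.ofReal (prodPMF n u x *
          (|(x i : ℝ) / n - u i| * |(x j : ℝ) / n - u j|))
          = ENNReal.ofReal (A1 / n * (A1 / n)) := by
      intro i j hj
      have hij : i ≠ j := (Finset.mem_erase.mp hj).1.symm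
      refine exp_pair hu0 hij (fun k => |(k : ℝ) / n - u i|) (fun k => |(k : ℝ) / n - u j|)
        (fun k => abs_nonneg _) (fun k => abs_nonneg _) ?_ ?_
      · exact hEsum i
      · exact hEsum j
    have hcard : ∀ i : Fin S, (Finset.univ.erase i).card = S - 1 := fun i => by
      rw [Finset.card_erase_of_mem (Finset.mem_univ i), Finset.card_univ, Fintype.card_fin]
    have hterm : (1 : ℝ) / 8 * S / n ≤ ((S * (S - 1) : ℕ) : ℝ) * (A1 / n * (A1 / n)) := by
      have hcast : ((S * (S - 1) : ℕ) : ℝ) = (S : ℝ) * ((S : ℝ) - 1) := by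
        push_cast [Nat.cast_sub hS]
        ring
      have hsq : lam / (4 * (n : ℝ) ^ 2) ≤ A1 / n * (A1 / n) := by
        have hss : Real.sqrt lam * Real.sqrt lam = lam := Real.mul_self_sqrt hlam0
        have h1 : Real.sqrt lam / 2 / n ≤ A1 / n := by gcongr
        have h2 : (0 : ℝ) ≤ Real.sqrt lam / 2 / n := by positivity
        calc lam / (4 * (n : ℝ) ^ 2)
            = Real.sqrt lam * Real.sqrt lam / (4 * (n : ℝ) ^ 2) := by rw [hss]
          _ = (Real.sqrt lam / 2 / n) * (Real.sqrt lam / 2 / n) := by ring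
          _ ≤ A1 / n * (A1 / n) := mul_le_mul h1 h1 h2 (by positivity)
      have h3 : (1 : ℝ) / 8 * S / n ≤ ((S : ℝ) * ((S : ℝ) - 1)) * (lam / (4 * (n : ℝ) ^ 2)) := by
        have hSge2 : (2 : ℝ) ≤ S := by exact_mod_cast hS2
        rw [hlam]
        have hSne : (S : ℝ) ≠ 0 := hSR.ne'
        have heq2 : ((S : ℝ) * ((S : ℝ) - 1)) * ((n : ℝ) * (S : ℝ)⁻¹ / (4 * (n : ℝ) ^ 2))
            = ((S : ℝ) - 1) / (4 * n) := by
          field_simp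
        rw [heq2]
        rw [div_le_div_iff₀ (by positivity) (by positivity)]
        nlinarith [hnR, hSge2]
      calc (1 : ℝ) / 8 * S / n ≤ ((S : ℝ) * ((S : ℝ) - 1)) * (lam / (4 * (n : ℝ) ^ 2)) := h3
        _ ≤ ((S : ℝ) * ((S : ℝ) - 1)) * (A1 / n * (A1 / n)) := by
            refine mul_le_mul_of_nonneg_left hsq ?_
            nlinarith [hSR, hS2]
        _ = ((S * (S - 1) : ℕ) : ℝ) * (A1 / n * (A1 / n)) := by rw [hcast]
    calc ENNReal.ofReal (1 / 8 * S / n)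
        ≤ ENNReal.ofReal (((S * (S - 1) : ℕ) : ℝ) * (A1 / n * (A1 / n))) :=
          ENNReal.ofReal_le_ofReal hterm
      _ = ((S * (S - 1) : ℕ) : ℝ≥0∞) * ENNReal.ofReal (A1 / n * (A1 / n)) := by
          rw [ENNReal.ofReal_mul (Nat.cast_nonneg _), ENNReal.ofReal_natCast]
      _ = ∑ i : Fin S, ∑ j ∈ Finset.univ.erase i, ENNReal.ofReal (A1 / n * (A1 / n)) := by
          have hr : ∀ i : Fin S, ∑ j ∈ Finset.univ.erase i,
              ENNReal.ofReal (A1 / n * (A1 / n))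
                = ((S - 1 : ℕ) : ℝ≥0∞) * ENNReal.ofReal (A1 / n * (A1 / n)) := by
            intro i
            rw [Finset.sum_const, hcard i, nsmul_eq_mul]
          rw [Finset.sum_congr rfl fun i _ => hr i, Finset.sum_const, Finset.card_univ,
            Fintype.card_fin, nsmul_eq_mul, Nat.cast_mul, mul_assoc]
      _ = ∑ i : Fin S, ∑ j ∈ Finset.univ.erase i,
            ∑' x : Fin S → ℕ, ENNReal.ofReal (prodPMF n u x *
              (|(x i : ℝ) / n - u i| * |(x j : ℝ) / n - u j|)) := by
          refine Finset.sum_congr rfl fun i _ => Finset.sum_congr rfl fun j hj => ?_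
          rw [key i j hj]
      _ = ∑' x : Fin S → ℕ, ∑ i : Fin S, ∑ j ∈ Finset.univ.erase i,
            ENNReal.ofReal (prodPMF n u x *
              (|(x i : ℝ) / n - u i| * |(x j : ℝ) / n - u j|)) := by
          rw [Summable.tsum_finsetSum fun i _ => ENNReal.summable]
          exact Finset.sum_congr rfl fun i _ => (Summable.tsum_finsetSum fun j _ => ENNReal.summable).symm
      _ = ∑' x : Fin S → ℕ, ENNReal.ofReal (prodPMF n u x *
            ∑ i : Fin S, ∑ j ∈ Finset.univ.erase i,
              (|(x i : ℝ) / n - u i| * |(x j : ℝ) / n - u j|)) := by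
          refine tsum_congr fun x => ?_
          rw [Finset.mul_sum]
          rw [ENNReal.ofReal_sum_of_nonneg fun i _ => ?pos]
          case pos =>
            exact mul_nonneg (prodPMF_nonneg (n := n) hu0 x)
              (Finset.sum_nonneg fun j _ => mul_nonneg (abs_nonneg _) (abs_nonneg _))
          refine (Finset.sum_congr rfl fun i _ => ?_).symm
          rw [Finset.mul_sum]
          exact ENNReal.ofReal_sum_of_nonneg fun j _ =>
            mul_nonneg (prodPMF_nonneg (n := n) hu0 x)
              (mul_nonneg (abs_nonneg _) (abs_nonneg _))
      _ ≤ risk n u (L1dist u u) (mleEst n u) := by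
          rw [risk]
          refine ENNReal.tsum_le_tsum fun x => ENNReal.ofReal_le_ofReal ?_
          exact mul_le_mul_of_nonneg_left (hpt x) (prodPMF_nonneg (n := n) hu0 x)

end MLEAux

/-- for `n ≳ S`, the worst-case risk of the MLE is of order `S/n`. -/
theorem mle_risk_order : ∃ c C c₀ : ℝ, 0 < c ∧ c ≤ C ∧ 1 ≤ c₀ ∧
    ∀ S n : ℕ, 0 < S → 0 < n → c₀ * S ≤ n →
      ENNReal.ofReal (c * S / n) ≤
        (⨆ pq : {p : Fin S → ℝ // IsDist p} × {q : Fin S → ℝ // IsDist q},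
          risk n pq.1.1 (L1dist pq.1.1 pq.2.1) (mleEst n pq.2.1)) ∧
      (⨆ pq : {p : Fin S → ℝ // IsDist p} × {q : Fin S → ℝ // IsDist q},
          risk n pq.1.1 (L1dist pq.1.1 pq.2.1) (mleEst n pq.2.1)) ≤
        ENNReal.ofReal (C * S / n) := by
  refine ⟨1/8, 1, 1, by norm_num, by norm_num, le_refl 1, ?_⟩
  intro S n hS hn hc
  have hSn : (S : ℝ) ≤ n := by rw [one_mul] at hc; exact hc
  constructor
  · refine le_trans (MLEAux.risk_uniform_ge hS hn hSn)
      (le_iSup (fun pq : {p : Fin S → ℝ // IsDist p} × {q : Fin S → ℝ // IsDist q} =>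
        risk n pq.1.1 (L1dist pq.1.1 pq.2.1) (mleEst n pq.2.1))
        ⟨⟨fun _ => (S : ℝ)⁻¹, MLEAux.uniform_isDist hS⟩,
          ⟨fun _ => (S : ℝ)⁻¹, MLEAux.uniform_isDist hS⟩⟩)
  · refine iSup_le fun pq => ?_
    rw [one_mul]
    exact MLEAux.risk_le hn pq.1.2 pq.2.2
end

section
/- Let c₁ > 0, let n ≥ 2 be an integer, let q ∈ [0,1], and let q̂ = X/n where X ~ Poisson(nq). Then P(q̂ ∉ U(q;c₁)) ≤ 2·n^{−c₁/3}. -/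
open scoped BigOperators Classical

/-- The confidence interval `U(q; c₁)` from the paper. -/
noncomputable def Uset (c₁ : ℝ) (n : ℕ) (q : ℝ) : Set ℝ :=
  if q ≤ c₁ * Real.log n / n then
    Set.Icc 0 (2 * c₁ * Real.log n / n)
  else
    Set.Icc (q - Real.sqrt (c₁ * q * Real.log n / n)) (q + Real.sqrt (c₁ * q * Real.log n / n))

lemma poissonPMF_nonneg {lam : ℝ} (h : 0 ≤ lam) (k : ℕ) : 0 ≤ poissonPMF lam k := by
  unfold poissonPMF
  positivity

lemma poisson_mgf_fun (lam t : ℝ) (k : ℕ) :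
    poissonPMF lam k * Real.exp (t * k) =
      Real.exp (-lam) * ((lam * Real.exp t) ^ k / (Nat.factorial k)) := by
  unfold poissonPMF
  rw [mul_pow, ← Real.exp_nat_mul]
  ring_nf

lemma poisson_mgf_summable (lam t : ℝ) :
    Summable (fun k : ℕ => poissonPMF lam k * Real.exp (t * k)) := by
  simp_rw [poisson_mgf_fun]
  exact (Real.summable_pow_div_factorial _).mul_left _

lemma poisson_mgf (lam t : ℝ) :
    ∑' k : ℕ, poissonPMF lam k * Real.exp (t * k) =
      Real.exp (lam * Real.exp t - lam) := by
  simp_rw [poisson_mgf_fun]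
  rw [tsum_mul_left]
  have : ∑' k : ℕ, (lam * Real.exp t) ^ k / (Nat.factorial k : ℝ)
      = Real.exp (lam * Real.exp t) := by
    rw [Real.exp_eq_exp_ℝ, NormedSpace.exp_eq_tsum_div]
  rw [this, ← Real.exp_add]
  ring_nf

lemma poisson_tail (lam a t : ℝ) (hlam : 0 ≤ lam) (C : ℕ → Prop) [DecidablePred C]
    (hC : ∀ k : ℕ, C k → t * a ≤ t * k) :
    ∑' k : ℕ, (if C k then poissonPMF lam k else 0) ≤
      Real.exp (lam * Real.exp t - lam - t * a) := by
  have hsum : Summable (fun k : ℕ => poissonPMF lam k * Real.exp (t * k) * Real.exp (-(t * a))) :=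
    (poisson_mgf_summable lam t).mul_right _
  have hle : ∀ k : ℕ, (if C k then poissonPMF lam k else 0) ≤
      poissonPMF lam k * Real.exp (t * k) * Real.exp (-(t * a)) := by
    intro k
    by_cases h : C k
    · rw [if_pos h]
      have h1 : (1 : ℝ) ≤ Real.exp (t * k) * Real.exp (-(t * a)) := by
        rw [← Real.exp_add]
        have := hC k h
        nlinarith [Real.add_one_le_exp (t * k + -(t * a))]
      nlinarith [poissonPMF_nonneg hlam k]
    · rw [if_neg h]
      have := poissonPMF_nonneg hlam k
      positivity
  have hnn : ∀ k : ℕ, 0 ≤ (if C k then poissonPMF lam k else 0) := by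
    intro k; by_cases h : C k
    · rw [if_pos h]; exact poissonPMF_nonneg hlam k
    · rw [if_neg h]
  calc ∑' k : ℕ, (if C k then poissonPMF lam k else 0)
      ≤ ∑' k : ℕ, poissonPMF lam k * Real.exp (t * k) * Real.exp (-(t * a)) :=
        Summable.tsum_le_tsum hle (Summable.of_nonneg_of_le hnn hle hsum) hsum
    _ = Real.exp (lam * Real.exp t - lam - t * a) := by
        rw [tsum_mul_right, poisson_mgf, ← Real.exp_add]; ring_nf

lemma exp_le_quad {t : ℝ} (ht : |t| ≤ 1) : Real.exp t ≤ 1 + t + (3/4) * t ^ 2 := by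
  have h := Real.exp_bound ht (n := 2) (by norm_num)
  rw [Finset.sum_range_succ, Finset.sum_range_one] at h
  simp [Nat.factorial] at h
  rw [abs_sub_le_iff] at h
  nlinarith [h.1, sq_abs t]

/-- `P(q̂ ∉ U(q;c₁)) ≤ 2 n^{-c₁/3}` for `q̂ = X/n`, `X ~ Poisson(nq)`. -/
theorem poisson_confidence (c₁ : ℝ) (hc₁ : 0 < c₁) (n : ℕ) (hn : 2 ≤ n)
    (q : ℝ) (hq : q ∈ Set.Icc (0 : ℝ) 1) :
    (∑' k : ℕ, if ((k : ℝ) / n) ∈ Uset c₁ n q then 0 else poissonPMF (n * q) k) ≤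
      2 * (n : ℝ) ^ (-(c₁ / 3)) := by
  obtain ⟨hq0, hq1⟩ := hq
  have hn0 : (0 : ℝ) < n := by positivity
  have hn1 : (1 : ℝ) < n := by exact_mod_cast Nat.lt_of_lt_of_le one_lt_two hn
  have hlog : 0 < Real.log n := Real.log_pos hn1
  obtain ⟨L, hLdef⟩ : ∃ L : ℝ, L = c₁ * Real.log n := ⟨_, rfl⟩
  have hL0 : 0 < L := hLdef ▸ mul_pos hc₁ hlog
  obtain ⟨lam, hlamdef⟩ : ∃ lam : ℝ, lam = (n : ℝ) * q := ⟨_, rfl⟩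
  have hlam : 0 ≤ lam := by rw [hlamdef]; positivity
  have hpow : (n : ℝ) ^ (-(c₁ / 3)) = Real.exp (-(L / 3)) := by
    rw [Real.rpow_def_of_pos hn0]
    congr 1
    rw [hLdef]; ring
  rw [show ((n : ℝ) * q) = lam from hlamdef.symm]
  have hpmf : Summable (poissonPMF lam) := by
    have := poisson_mgf_summable lam 0
    simpa using this
  have hfnn : ∀ k : ℕ, 0 ≤ (if ((k : ℝ) / n) ∈ Uset c₁ n q then 0 else poissonPMF lam k) := by
    intro k; split
    · exact le_rfl
    · exact poissonPMF_nonneg hlam k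
  by_cases h : q ≤ c₁ * Real.log n / n
  · -- small q case
    have hU : Uset c₁ n q = Set.Icc 0 (2 * c₁ * Real.log n / n) := by
      simp only [Uset]; rw [if_pos h]
    have hlamL : lam ≤ L := by
      rw [hlamdef, hLdef]
      calc (n : ℝ) * q ≤ (n : ℝ) * (c₁ * Real.log n / n) :=
            mul_le_mul_of_nonneg_left h hn0.le
        _ = c₁ * Real.log n := by field_simp
    have hgnn : ∀ k : ℕ, 0 ≤ (if 2 * L < (k : ℝ) then poissonPMF lam k else 0) := by
      intro k; split
      · exact poissonPMF_nonneg hlam k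
      · exact le_rfl
    have hgle : ∀ k : ℕ, (if 2 * L < (k : ℝ) then poissonPMF lam k else 0)
        ≤ poissonPMF lam k := by
      intro k; split
      · exact le_rfl
      · exact poissonPMF_nonneg hlam k
    have hgsum : Summable (fun k : ℕ => if 2 * L < (k : ℝ) then poissonPMF lam k else 0) :=
      Summable.of_nonneg_of_le hgnn hgle hpmf
    have hfle : ∀ k : ℕ, (if ((k : ℝ) / n) ∈ Uset c₁ n q then 0 else poissonPMF lam k)
        ≤ (if 2 * L < (k : ℝ) then poissonPMF lam k else 0) := by
      intro k
      by_cases hm : ((k : ℝ) / n) ∈ Uset c₁ n q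
      · rw [if_pos hm]; exact hgnn k
      · rw [if_neg hm]
        have hknn : (0 : ℝ) ≤ (k : ℝ) / n := by positivity
        rw [hU, Set.mem_Icc] at hm
        have hlt : 2 * c₁ * Real.log n / n < (k : ℝ) / n := by
          by_contra hcon
          push_neg at hcon
          exact hm ⟨hknn, hcon⟩
        have h2 : 2 * L < (k : ℝ) := by
          rw [div_lt_div_iff₀ hn0 hn0] at hlt
          rw [hLdef]
          nlinarith
        rw [if_pos h2]
    have hfsum : Summable (fun k : ℕ =>
        if ((k : ℝ) / n) ∈ Uset c₁ n q then 0 else poissonPMF lam k) :=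
      Summable.of_nonneg_of_le hfnn hfle hgsum
    have tail : (∑' k : ℕ, if 2 * L < (k : ℝ) then poissonPMF lam k else 0)
        ≤ Real.exp (-(L / 3)) := by
      have hC : ∀ k : ℕ, 2 * L < (k : ℝ) →
          Real.log 2 * (2 * L) ≤ Real.log 2 * k := fun k hk =>
        mul_le_mul_of_nonneg_left hk.le (Real.log_nonneg (by norm_num))
      refine (poisson_tail lam (2 * L) (Real.log 2) hlam
        (fun k => 2 * L < (k : ℝ)) hC).trans (Real.exp_le_exp.mpr ?_)
      rw [Real.exp_log (by norm_num : (0:ℝ) < 2)]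
      nlinarith [Real.log_two_gt_d9, hL0, hlamL]
    calc (∑' k : ℕ, if ((k : ℝ) / n) ∈ Uset c₁ n q then 0 else poissonPMF lam k)
        ≤ ∑' k : ℕ, (if 2 * L < (k : ℝ) then poissonPMF lam k else 0) :=
          Summable.tsum_le_tsum hfle hfsum hgsum
      _ ≤ Real.exp (-(L / 3)) := tail
      _ ≤ 2 * (n : ℝ) ^ (-(c₁ / 3)) := by
          rw [hpow]
          nlinarith [Real.exp_pos (-(L / 3))]
  · -- large q case
    have hU : Uset c₁ n q = Set.Icc (q - Real.sqrt (c₁ * q * Real.log n / n))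
        (q + Real.sqrt (c₁ * q * Real.log n / n)) := by
      simp only [Uset]; rw [if_neg h]
    push_neg at h
    have hq0' : 0 < q := lt_trans (by positivity) h
    have hlam0 : 0 < lam := by rw [hlamdef]; positivity
    have hLlam : L < lam := by
      rw [hlamdef, hLdef]
      have h1 := mul_lt_mul_of_pos_left h hn0
      calc c₁ * Real.log n = (n : ℝ) * (c₁ * Real.log n / n) := by field_simp
        _ < (n : ℝ) * q := h1
    obtain ⟨x, hxdef⟩ : ∃ x : ℝ, x = Real.sqrt (lam * L) := ⟨_, rfl⟩
    have hx0 : 0 < x := hxdef ▸ Real.sqrt_pos.mpr (by positivity)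
    have hx2 : x ^ 2 = lam * L := hxdef ▸ Real.sq_sqrt (by positivity)
    have hxlam : x ≤ lam := by
      rw [hxdef]
      calc Real.sqrt (lam * L) ≤ Real.sqrt (lam * lam) :=
            Real.sqrt_le_sqrt (by nlinarith)
        _ = lam := Real.sqrt_mul_self hlam
    have hsx : Real.sqrt (c₁ * q * Real.log n / n) * n = x := by
      rw [hxdef]
      have harg : lam * L = (c₁ * q * Real.log n / n) * (n : ℝ) ^ 2 := by
        rw [hlamdef, hLdef]; field_simp
      rw [harg, Real.sqrt_mul (by positivity) ((n:ℝ)^2), Real.sqrt_sq hn0.le]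
    have hmem : ∀ k : ℕ, ¬ (((k : ℝ) / n) ∈ Uset c₁ n q) →
        ((k : ℝ) < lam - x ∨ lam + x < (k : ℝ)) := by
      intro k hk
      rw [hU, Set.mem_Icc] at hk
      rcases not_and_or.mp hk with h1 | h1
      · left
        push_neg at h1
        rw [div_lt_iff₀ hn0] at h1
        rw [hlamdef]; nlinarith [hsx]
      · right
        push_neg at h1
        rw [lt_div_iff₀ hn0] at h1
        rw [hlamdef]; nlinarith [hsx]
    have hg1nn : ∀ k : ℕ, 0 ≤ (if (k : ℝ) < lam - x then poissonPMF lam k else 0) := by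
      intro k; split
      · exact poissonPMF_nonneg hlam k
      · exact le_rfl
    have hg2nn : ∀ k : ℕ, 0 ≤ (if lam + x < (k : ℝ) then poissonPMF lam k else 0) := by
      intro k; split
      · exact poissonPMF_nonneg hlam k
      · exact le_rfl
    have hg1le : ∀ k : ℕ, (if (k : ℝ) < lam - x then poissonPMF lam k else 0)
        ≤ poissonPMF lam k := by
      intro k; split
      · exact le_rfl
      · exact poissonPMF_nonneg hlam k
    have hg2le : ∀ k : ℕ, (if lam + x < (k : ℝ) then poissonPMF lam k else 0)
        ≤ poissonPMF lam k := by
      intro k; split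
      · exact le_rfl
      · exact poissonPMF_nonneg hlam k
    have hg1sum : Summable (fun k : ℕ => if (k : ℝ) < lam - x then poissonPMF lam k else 0) :=
      Summable.of_nonneg_of_le hg1nn hg1le hpmf
    have hg2sum : Summable (fun k : ℕ => if lam + x < (k : ℝ) then poissonPMF lam k else 0) :=
      Summable.of_nonneg_of_le hg2nn hg2le hpmf
    have hfle : ∀ k : ℕ, (if ((k : ℝ) / n) ∈ Uset c₁ n q then 0 else poissonPMF lam k)
        ≤ (if (k : ℝ) < lam - x then poissonPMF lam k else 0)
          + (if lam + x < (k : ℝ) then poissonPMF lam k else 0) := by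
      intro k
      by_cases hm : ((k : ℝ) / n) ∈ Uset c₁ n q
      · rw [if_pos hm]
        exact add_nonneg (hg1nn k) (hg2nn k)
      · rw [if_neg hm]
        rcases hmem k hm with h1 | h1
        · rw [if_pos h1]
          have := hg2nn k
          linarith
        · rw [if_pos h1]
          have := hg1nn k
          linarith
    have hfsum : Summable (fun k : ℕ =>
        if ((k : ℝ) / n) ∈ Uset c₁ n q then 0 else poissonPMF lam k) :=
      Summable.of_nonneg_of_le hfnn hfle (hg1sum.add hg2sum)
    have hlamne : lam ≠ 0 := ne_of_gt hlam0
    have habs1 : |(-(2 * x / (3 * lam)))| ≤ 1 := by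
      rw [abs_neg, abs_of_nonneg (by positivity)]
      rw [div_le_one (by positivity)]
      linarith
    have habs2 : |(2 * x / (3 * lam))| ≤ 1 := by
      rw [abs_of_nonneg (by positivity)]
      rw [div_le_one (by positivity)]
      linarith
    have hid1 : (3/4) * lam * (-(2 * x / (3 * lam))) ^ 2 + (-(2 * x / (3 * lam))) * x
        + L / 3 = 0 := by
      field_simp
      linear_combination (-4) * hx2
    have hid2 : (3/4) * lam * (2 * x / (3 * lam)) ^ 2 - (2 * x / (3 * lam)) * x
        + L / 3 = 0 := by
      field_simp
      linear_combination (-4) * hx2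
    have tail1 : (∑' k : ℕ, if (k : ℝ) < lam - x then poissonPMF lam k else 0)
        ≤ Real.exp (-(L / 3)) := by
      have hC : ∀ k : ℕ, (k : ℝ) < lam - x →
          (-(2 * x / (3 * lam))) * (lam - x) ≤ (-(2 * x / (3 * lam))) * k := by
        intro k hk
        apply mul_le_mul_of_nonpos_left hk.le
        have : 0 ≤ 2 * x / (3 * lam) := by positivity
        linarith
      refine (poisson_tail lam (lam - x) (-(2 * x / (3 * lam))) hlam
        (fun k => (k : ℝ) < lam - x) hC).trans (Real.exp_le_exp.mpr ?_)
      have hA := mul_le_mul_of_nonneg_left (exp_le_quad habs1) hlam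
      linarith [hA, hid1]
    have tail2 : (∑' k : ℕ, if lam + x < (k : ℝ) then poissonPMF lam k else 0)
        ≤ Real.exp (-(L / 3)) := by
      have hC : ∀ k : ℕ, lam + x < (k : ℝ) →
          (2 * x / (3 * lam)) * (lam + x) ≤ (2 * x / (3 * lam)) * k := by
        intro k hk
        exact mul_le_mul_of_nonneg_left hk.le (by positivity)
      refine (poisson_tail lam (lam + x) (2 * x / (3 * lam)) hlam
        (fun k => lam + x < (k : ℝ)) hC).trans (Real.exp_le_exp.mpr ?_)
      have hA := mul_le_mul_of_nonneg_left (exp_le_quad habs2) hlam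
      linarith [hA, hid2]
    calc (∑' k : ℕ, if ((k : ℝ) / n) ∈ Uset c₁ n q then 0 else poissonPMF lam k)
        ≤ ∑' k : ℕ, ((if (k : ℝ) < lam - x then poissonPMF lam k else 0)
            + (if lam + x < (k : ℝ) then poissonPMF lam k else 0)) :=
          Summable.tsum_le_tsum hfle hfsum (hg1sum.add hg2sum)
      _ = (∑' k : ℕ, if (k : ℝ) < lam - x then poissonPMF lam k else 0)
            + (∑' k : ℕ, if lam + x < (k : ℝ) then poissonPMF lam k else 0) :=
          Summable.tsum_add hg1sum hg2sum
      _ ≤ Real.exp (-(L / 3)) + Real.exp (-(L / 3)) := add_le_add tail1 tail2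
      _ = 2 * (n : ℝ) ^ (-(c₁ / 3)) := by rw [hpow]; ring
end

section
/- There exist universal constants 0 < c ≤ C and c₀ ≥ 1 such that for all positive integers S and n with n ≥ c₀·S, the maximum likelihood estimator L_1(P_n,Q_n) = Σ_{i=1}^S |p̂_i − q̂_i| in the two-sample Poisson sampling model satisfies c·S/n ≤ sup_{P,Q ∈ M_S} E |L_1(P_n,Q_n) − L_1(P,Q)|² ≤ C·S/n. -/
open scoped BigOperators ENNReal

/-- Joint pmf of the two-sample Poisson model: all of
`X_i ~ Poisson(n p_i)`, `Y_i ~ Poisson(n q_i)` mutually independent. -/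
noncomputable def prodPMF2 {S : ℕ} (n : ℕ) (p q : Fin S → ℝ)
    (xy : (Fin S → ℕ) × (Fin S → ℕ)) : ℝ :=
  prodPMF n p xy.1 * prodPMF n q xy.2

/-- The mean squared error `E (est(X,Y) - L)²` in the two-sample Poisson sampling model. -/
noncomputable def risk2 {S : ℕ} (n : ℕ) (p q : Fin S → ℝ) (L : ℝ)
    (est : (Fin S → ℕ) × (Fin S → ℕ) → ℝ) : ℝ≥0∞ :=
  ∑' xy : (Fin S → ℕ) × (Fin S → ℕ),
    ENNReal.ofReal (prodPMF2 n p q xy * (est xy - L) ^ 2)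

/-- The plug-in (MLE) estimator `L₁(P_n, Q_n) = Σ_i |X_i/n - Y_i/n|`. -/
noncomputable def mle2 {S : ℕ} (n : ℕ) (xy : (Fin S → ℕ) × (Fin S → ℕ)) : ℝ :=
  ∑ i, |(xy.1 i : ℝ) / n - (xy.2 i : ℝ) / n|

namespace MleAux

open scoped NNReal

lemma pois_nonneg {lam : ℝ} (h : 0 ≤ lam) (k : ℕ) : 0 ≤ poissonPMF lam k := by
  unfold poissonPMF; positivity

lemma pois_hasSum {lam : ℝ} (h : 0 ≤ lam) : HasSum (poissonPMF lam) 1 := by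
  have h2 := ProbabilityTheory.poissonPMFRealSum ⟨lam, h⟩
  have : poissonPMF lam = fun k => ProbabilityTheory.poissonPMFReal ⟨lam, h⟩ k := by
    funext k; simp [poissonPMF, ProbabilityTheory.poissonPMFReal]; rfl
  rw [this]; exact h2

noncomputable def dsc (r k : ℕ) : ℝ := ∏ t ∈ Finset.range r, ((k : ℝ) - t)

lemma dsc_eq_zero {r k : ℕ} (h : k < r) : dsc r k =
    0 :=
  Finset.prod_eq_zero (Finset.mem_range.mpr h) (by simp)

lemma prod_dsc (r j : ℕ) : dsc r (j + r) * (Nat.factorial j : ℝ) = (Nat.factorial (j + r) : ℝ) := by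
  induction r with
  | zero => simp [dsc]
  | succ r ih =>
    have h : dsc (r+1) (j + (r+1)) = dsc r (j + r) * ((j : ℝ) + r + 1) := by
      unfold dsc
      rw [Finset.prod_range_succ']
      congr 1
      · apply Finset.prod_congr rfl; intro t ht; push_cast; ring
      · push_cast; ring
    have h2 : (Nat.factorial (j + (r+1)) : ℝ) = ((j:ℝ) + r + 1) * (Nat.factorial (j + r) : ℝ) := by
      rw [show j + (r+1) = (j + r) + 1 by ring, Nat.factorial_succ]; push_cast; ring
    rw [h, h2]
    linear_combination ((j:ℝ) + r + 1) * ih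

lemma pois_dsc_hasSum {lam : ℝ} (h : 0 ≤ lam) (r : ℕ) :
    HasSum (fun k => poissonPMF lam k * dsc r k) (lam ^ r) := by
  have hinj : Function.Injective (fun j : ℕ => j + r) := fun a b hab => by simpa using hab
  have hzero : ∀ x ∉ Set.range (fun j : ℕ => j + r), poissonPMF lam x * dsc r x = 0 := by
    intro x hx
    have hx' : x < r := by
      by_contra hc
      exact hx ⟨x - r, by dsimp; omega⟩
    rw [dsc_eq_zero hx', mul_zero]
  rw [← Function.Injective.hasSum_iff hinj hzero]
  have key : ∀ j : ℕ, poissonPMF lam (j + r) * dsc r (j + r) = lam ^ r * poissonPMF lam j := by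
    intro j
    have hfj : (Nat.factorial j : ℝ) ≠ 0 := by positivity
    have hfjr : (Nat.factorial (j + r) : ℝ) ≠ 0 := by positivity
    have h2 : dsc r (j + r) = (Nat.factorial (j+r) : ℝ) / (Nat.factorial j : ℝ) := by
      rw [eq_div_iff hfj]; exact prod_dsc r j
    unfold poissonPMF
    rw [h2, pow_add]
    field_simp
  have H := (pois_hasSum h).mul_left (lam ^ r)
  rw [mul_one] at H
  have hc : ((fun x => poissonPMF lam x * dsc r x) ∘ fun j => j + r)
      = fun j => lam ^ r * poissonPMF lam j := by
    funext j; simpa [Function.comp] using key j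
  rw [hc]; exact H

lemma pois_m1 {lam : ℝ} (h : 0 ≤ lam) :
    HasSum (fun k => poissonPMF lam k * (k : ℝ)) lam := by
  have H := pois_dsc_hasSum h 1
  have hfun : (fun k : ℕ => poissonPMF lam k * (k : ℝ)) = fun k => poissonPMF lam k * dsc 1 k := by
    funext k; simp [dsc]
  rw [hfun]; simpa using H

lemma pois_m2 {lam : ℝ} (h : 0 ≤ lam) :
    HasSum (fun k => poissonPMF lam k * (k : ℝ)^2) (lam^2 + lam) := by
  have H := (pois_dsc_hasSum h 2).add (pois_dsc_hasSum h 1)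
  have hfun : (fun k : ℕ => poissonPMF lam k * (k : ℝ)^2)
      = fun k => poissonPMF lam k * dsc 2 k + poissonPMF lam k * dsc 1 k := by
    funext k; simp [dsc, Finset.prod_range_succ]; ring
  rw [hfun]; simpa using H

lemma pois_m3 {lam : ℝ} (h : 0 ≤ lam) :
    HasSum (fun k => poissonPMF lam k * (k : ℝ)^3) (lam^3 + 3*lam^2 + lam) := by
  have H := (pois_dsc_hasSum h 3).add (((pois_dsc_hasSum h 2).mul_left 3).add (pois_dsc_hasSum h 1))
  have hfun : (fun k : ℕ => poissonPMF lam k * (k : ℝ)^3)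
      = fun k => poissonPMF lam k * dsc 3 k +
          (3 * (poissonPMF lam k * dsc 2 k) + poissonPMF lam k * dsc 1 k) := by
    funext k; simp [dsc, Finset.prod_range_succ]; ring
  rw [hfun]
  have : lam^3 + 3*lam^2 + lam = lam^3 + (3*lam^2 + lam^1) := by ring
  rw [this]; exact H

lemma pois_m4 {lam : ℝ} (h : 0 ≤ lam) :
    HasSum (fun k => poissonPMF lam k * (k : ℝ)^4) (lam^4 + 6*lam^3 + 7*lam^2 + lam) := by
  have H := (pois_dsc_hasSum h 4).add (((pois_dsc_hasSum h 3).mul_left 6).add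
    (((pois_dsc_hasSum h 2).mul_left 7).add (pois_dsc_hasSum h 1)))
  have hfun : (fun k : ℕ => poissonPMF lam k * (k : ℝ)^4)
      = fun k => poissonPMF lam k * dsc 4 k +
          (6 * (poissonPMF lam k * dsc 3 k) +
            (7 * (poissonPMF lam k * dsc 2 k) + poissonPMF lam k * dsc 1 k)) := by
    funext k; simp [dsc, Finset.prod_range_succ]; ring
  rw [hfun]
  have : lam^4 + 6*lam^3 + 7*lam^2 + lam = lam^4 + (6*lam^3 + (7*lam^2 + lam^1)) := by ring
  rw [this]; exact H

noncomputable def pois2 (a b : ℝ) (z : ℕ × ℕ) : ℝ := poissonPMF a z.1 * poissonPMF b z.2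

lemma hs_sep {f g : ℕ → ℝ} {s t : ℝ} (hf : HasSum f s) (hg : HasSum g t)
    (hf0 : ∀ k, 0 ≤ f k) (hg0 : ∀ k, 0 ≤ g k) :
    HasSum (fun z : ℕ × ℕ => f z.1 * g z.2) (s * t) :=
  hf.mul hg (hf.summable.mul_of_nonneg hg.summable hf0 hg0)

lemma pois2_nonneg {a b : ℝ} (ha : 0 ≤ a) (hb : 0 ≤ b) (z : ℕ × ℕ) : 0 ≤ pois2 a b z :=
  mul_nonneg (pois_nonneg ha _) (pois_nonneg hb _)

lemma pois2_mass {a b : ℝ} (ha : 0 ≤ a) (hb : 0 ≤ b) : HasSum (pois2 a b) 1 := by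
  have := hs_sep (pois_hasSum ha) (pois_hasSum hb) (pois_nonneg ha) (pois_nonneg hb)
  rw [mul_one] at this; exact this

lemma nn_pk {lam : ℝ} (h : 0 ≤ lam) (j : ℕ) : ∀ k : ℕ, 0 ≤ poissonPMF lam k * (k:ℝ)^j :=
  fun k => mul_nonneg (pois_nonneg h k) (by positivity)

lemma skellam2 {lam : ℝ} (h : 0 ≤ lam) :
    HasSum (fun z : ℕ × ℕ => pois2 lam lam z * ((z.1:ℝ) - (z.2:ℝ))^2) (2*lam) := by
  have e0 := pois_hasSum h
  have e1 := pois_m1 h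
  have e2 := pois_m2 h
  have nn0 := pois_nonneg h
  have nn1 : ∀ k : ℕ, 0 ≤ poissonPMF lam k * (k:ℝ) := fun k => mul_nonneg (nn0 k) (by positivity)
  have nn2 := nn_pk h 2
  have H := ((hs_sep e2 e0 nn2 nn0).add (hs_sep e0 e2 nn0 nn2)).sub ((hs_sep e1 e1 nn1 nn1).mul_left 2)
  have hfun : (fun z : ℕ × ℕ => pois2 lam lam z * ((z.1:ℝ) - (z.2:ℝ))^2)
      = fun z : ℕ × ℕ => (poissonPMF lam z.1 * (z.1:ℝ)^2) * poissonPMF lam z.2 +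
          poissonPMF lam z.1 * (poissonPMF lam z.2 * (z.2:ℝ)^2) -
          2 * ((poissonPMF lam z.1 * (z.1:ℝ)) * (poissonPMF lam z.2 * (z.2:ℝ))) := by
    funext z; simp only [pois2]; ring
  have hval : 2*lam = (lam^2+lam) * 1 + 1 * (lam^2+lam) - 2 * (lam * lam) := by ring
  rw [hfun, hval]; exact H

lemma skellam4 {lam : ℝ} (h : 0 ≤ lam) :
    HasSum (fun z : ℕ × ℕ => pois2 lam lam z * ((z.1:ℝ) - (z.2:ℝ))^4) (12*lam^2 + 2*lam) := by
  have e0 := pois_hasSum h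
  have e1 := pois_m1 h
  have e2 := pois_m2 h
  have e3 := pois_m3 h
  have e4 := pois_m4 h
  have nn0 := pois_nonneg h
  have nn1 : ∀ k : ℕ, 0 ≤ poissonPMF lam k * (k:ℝ) := fun k => mul_nonneg (nn0 k) (by positivity)
  have nn2 := nn_pk h 2
  have nn3 := nn_pk h 3
  have nn4 := nn_pk h 4
  have H := (((hs_sep e4 e0 nn4 nn0).add (hs_sep e0 e4 nn0 nn4)).add
      ((hs_sep e2 e2 nn2 nn2).mul_left 6)).sub
      (((hs_sep e3 e1 nn3 nn1).add (hs_sep e1 e3 nn1 nn3)).mul_left 4)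
  have hfun : (fun z : ℕ × ℕ => pois2 lam lam z * ((z.1:ℝ) - (z.2:ℝ))^4)
      = fun z : ℕ × ℕ =>
          ((poissonPMF lam z.1 * (z.1:ℝ)^4) * poissonPMF lam z.2 +
            poissonPMF lam z.1 * (poissonPMF lam z.2 * (z.2:ℝ)^4) +
            6 * ((poissonPMF lam z.1 * (z.1:ℝ)^2) * (poissonPMF lam z.2 * (z.2:ℝ)^2))) -
          4 * ((poissonPMF lam z.1 * (z.1:ℝ)^3) * (poissonPMF lam z.2 * (z.2:ℝ)) +
            (poissonPMF lam z.1 * (z.1:ℝ)) * (poissonPMF lam z.2 * (z.2:ℝ)^3)) := by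
    funext z; simp only [pois2]; ring
  have hval : 12*lam^2 + 2*lam =
      ((lam^4+6*lam^3+7*lam^2+lam) * 1 + 1 * (lam^4+6*lam^3+7*lam^2+lam) +
        6 * ((lam^2+lam) * (lam^2+lam))) -
      4 * ((lam^3+3*lam^2+lam) * lam + lam * (lam^3+3*lam^2+lam)) := by ring
  rw [hfun, hval]; exact H

lemma central2 {n : ℕ} (hn : 0 < n) {c : ℝ} (hc : 0 ≤ c) :
    HasSum (fun k => poissonPMF ((n:ℝ)*c) k * ((k:ℝ)/(n:ℝ) - c)^2) (c / n) := by
  have hn' : (n:ℝ) ≠ 0 := Nat.cast_ne_zero.mpr hn.ne'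
  have h0 : (0:ℝ) ≤ (n:ℝ)*c := by positivity
  have H := (((pois_m2 h0).mul_left (1/(n:ℝ)^2)).sub ((pois_m1 h0).mul_left (2*c/n))).add
    ((pois_hasSum h0).mul_left (c^2))
  have hfun : (fun k : ℕ => poissonPMF ((n:ℝ)*c) k * ((k:ℝ)/(n:ℝ) - c)^2)
      = fun k => (1/(n:ℝ)^2 * (poissonPMF ((n:ℝ)*c) k * (k:ℝ)^2) -
          2*c/n * (poissonPMF ((n:ℝ)*c) k * (k:ℝ))) + c^2 * poissonPMF ((n:ℝ)*c) k := by
    funext k; field_simp; ring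
  have hval : c / n = (1/(n:ℝ)^2 * (((n:ℝ)*c)^2 + (n:ℝ)*c) - 2*c/n * ((n:ℝ)*c)) + c^2 * 1 := by
    field_simp; ring
  rw [hfun, hval]; exact H

/-! ### ENNReal helpers -/

lemma tsum_ofReal_eq {ι : Type*} {f : ι → ℝ} {a : ℝ} (hf : HasSum f a) (h0 : ∀ i, 0 ≤ f i) :
    ∑' i, ENNReal.ofReal (f i) = ENNReal.ofReal a := by
  rw [← ENNReal.ofReal_tsum_of_nonneg h0 hf.summable, hf.tsum_eq]

lemma tsum_mul_ofReal {ι : Type*} {w : ι → ℝ} (hw : ∀ i, 0 ≤ w i) {f : ι → ℝ} {a : ℝ}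
    (h : HasSum (fun i => w i * f i) a) (hf : ∀ i, 0 ≤ f i) :
    ∑' i, ENNReal.ofReal (w i) * ENNReal.ofReal (f i) = ENNReal.ofReal a := by
  rw [tsum_congr (fun i => (ENNReal.ofReal_mul (hw i)).symm)]
  exact tsum_ofReal_eq h (fun i => mul_nonneg (hw i) (hf i))

lemma two_mul_le_sq_add_sq (a b : ℝ≥0∞) : 2 * (a * b) ≤ a^2 + b^2 := by
  rcases eq_or_ne a ⊤ with ha | ha
  · have h : a^2 + b^2 = ⊤ := by simp [ha]
    rw [h]; exact le_top
  rcases eq_or_ne b ⊤ with hb | hb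
  · have h : a^2 + b^2 = ⊤ := by simp [hb]
    rw [h]; exact le_top
  obtain ⟨x, rfl⟩ : ∃ x : ℝ≥0, a = x := ⟨a.toNNReal, (ENNReal.coe_toNNReal ha).symm⟩
  obtain ⟨y, rfl⟩ : ∃ y : ℝ≥0, b = y := ⟨b.toNNReal, (ENNReal.coe_toNNReal hb).symm⟩
  have hr : (2:ℝ≥0) * (x * y) ≤ x^2 + y^2 := by
    rw [← NNReal.coe_le_coe]; push_cast; nlinarith [sq_nonneg ((x:ℝ) - (y:ℝ))]
  exact_mod_cast hr

lemma tsum_expand {ι : Type*} (u v : ι → ℝ≥0∞) :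
    (∑' i, u i) * (∑' j, v j) = ∑' (i : ι) (j : ι), u i * v j := by
  rw [← ENNReal.tsum_mul_right]
  exact tsum_congr fun i => (ENNReal.tsum_mul_left).symm

lemma tsum_cs {ι : Type*} (w f g : ι → ℝ≥0∞) :
    (∑' i, w i * (f i * g i))^2 ≤ (∑' i, w i * f i^2) * (∑' i, w i * g i^2) := by
  have key : ∀ i j : ι, 2 * ((w i * (f i * g i)) * (w j * (f j * g j))) ≤
      (w i * f i^2) * (w j * g j^2) + (w i * g i^2) * (w j * f j^2) := by
    intro i j
    have h := two_mul_le_sq_add_sq (f i * g j) (f j * g i)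
    calc 2 * ((w i * (f i * g i)) * (w j * (f j * g j)))
        = (w i * w j) * (2 * ((f i * g j) * (f j * g i))) := by ring
      _ ≤ (w i * w j) * ((f i * g j)^2 + (f j * g i)^2) := mul_le_mul_right h _
      _ = (w i * f i^2) * (w j * g j^2) + (w i * g i^2) * (w j * f j^2) := by ring
  have h2 : 2 * (∑' i, w i * (f i * g i))^2 ≤
      2 * ((∑' i, w i * f i^2) * (∑' i, w i * g i^2)) := by
    calc 2 * (∑' i, w i * (f i * g i))^2
        = ∑' (i : ι) (j : ι), 2 * ((w i * (f i * g i)) * (w j * (f j * g j))) := by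
          rw [sq, tsum_expand, ← ENNReal.tsum_mul_left]
          exact tsum_congr fun i => (ENNReal.tsum_mul_left).symm
      _ ≤ ∑' (i : ι) (j : ι), ((w i * f i^2) * (w j * g j^2) + (w i * g i^2) * (w j * f j^2)) :=
          ENNReal.tsum_le_tsum fun i => ENNReal.tsum_le_tsum fun j => key i j
      _ = (∑' (i : ι) (j : ι), (w i * f i^2) * (w j * g j^2)) +
          ∑' (i : ι) (j : ι), (w i * g i^2) * (w j * f j^2) := by
          rw [← ENNReal.tsum_add]
          exact tsum_congr fun i => ENNReal.tsum_add
      _ = 2 * ((∑' i, w i * f i^2) * (∑' i, w i * g i^2)) := by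
          rw [← tsum_expand, ← tsum_expand]; ring
  exact (ENNReal.mul_le_mul_iff_right (by norm_num) (by norm_num)).mp h2

/-! ### product space lemmas -/

lemma tsum_pi_prod {κ : Type*} : ∀ {S : ℕ} (f : Fin S → κ → ℝ≥0∞),
    ∑' x : Fin S → κ, ∏ i, f i (x i) = ∏ i, ∑' k, f i k := by
  intro S
  induction S with
  | zero =>
    intro f
    rw [show (∑' x : Fin 0 → κ, ∏ i, f i (x i)) = ∏ i, f i ((default : Fin 0 → κ) i) from
      tsum_eq_single default (fun b hb => absurd (Subsingleton.elim b default) hb)]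
    simp
  | succ S ih =>
    intro f
    set e := Fin.consEquiv (fun _ : Fin (S+1) => κ) with he
    rw [← e.tsum_eq fun x => ∏ i, f i (x i)]
    have hterm : ∀ p : κ × (Fin S → κ),
        (∏ i, f i (e p i)) = f 0 p.1 * ∏ i, f i.succ (p.2 i) := by
      intro p
      rw [Fin.prod_univ_succ]
      simp [he, Fin.consEquiv]
    calc ∑' p : κ × (Fin S → κ), ∏ i, f i (e p i)
        = ∑' (a : κ) (y : Fin S → κ), f 0 a * ∏ i, f i.succ (y i) := by
          rw [tsum_congr hterm]
          exact ENNReal.tsum_prod'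
      _ = (∑' a : κ, f 0 a) * ∑' y : Fin S → κ, ∏ i, f i.succ (y i) := by
          rw [← ENNReal.tsum_mul_right]
          exact tsum_congr fun a => ENNReal.tsum_mul_left
      _ = (∑' a : κ, f 0 a) * ∏ i : Fin S, ∑' k, f i.succ k := by rw [ih]
      _ = ∏ i, ∑' k, f i k := (Fin.prod_univ_succ (fun i => ∑' k, f i k)).symm

lemma tsum_pi_marginal {κ : Type*} {S : ℕ} (f : Fin S → κ → ℝ≥0∞)
    (hf : ∀ i, ∑' k, f i k = 1) (i₀ : Fin S) (g : κ → ℝ≥0∞) :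
    ∑' x : Fin S → κ, (∏ i, f i (x i)) * g (x i₀) = ∑' k, f i₀ k * g k := by
  classical
  have h1 : ∀ x : Fin S → κ, (∏ i, f i (x i)) * g (x i₀)
      = ∏ i, (fun i k => f i k * (if i = i₀ then g k else 1)) i (x i) := by
    intro x
    rw [Finset.prod_mul_distrib]
    congr 1
    rw [Finset.prod_ite_eq' Finset.univ i₀ (fun i => g (x i))]
    simp
  rw [tsum_congr h1, tsum_pi_prod (fun i k => f i k * (if i = i₀ then g k else 1))]
  have h2 : ∀ i : Fin S, (∑' k, f i k * (if i = i₀ then g k else 1))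
      = if i = i₀ then (∑' k, f i₀ k * g k) else 1 := by
    intro i
    by_cases hi : i = i₀
    · subst hi; simp
    · simp [hi, hf i]
  rw [Finset.prod_congr rfl (fun i _ => h2 i), Finset.prod_ite_eq' Finset.univ i₀
    (fun _ => ∑' k, f i₀ k * g k)]
  simp
/-! ### model-specific lemmas -/

lemma pois2_mass' {a b : ℝ} (ha : 0 ≤ a) (hb : 0 ≤ b) :
    ∑' z : ℕ × ℕ, ENNReal.ofReal (pois2 a b z) = 1 := by
  rw [tsum_ofReal_eq (pois2_mass ha hb) (pois2_nonneg ha hb), ENNReal.ofReal_one]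

lemma risk2_eq {S n : ℕ} (p q : Fin S → ℝ) (hp : ∀ i, 0 ≤ p i) (hq : ∀ i, 0 ≤ q i) (L : ℝ) :
    risk2 n p q L (mle2 n) =
      ∑' z : Fin S → ℕ × ℕ,
        (∏ i, ENNReal.ofReal (pois2 ((n:ℝ) * p i) ((n:ℝ) * q i) (z i))) *
          ENNReal.ofReal ((∑ i, |((z i).1:ℝ)/(n:ℝ) - ((z i).2:ℝ)/(n:ℝ)| - L)^2) := by
  classical
  set E := Equiv.arrowProdEquivProdArrow (Fin S) (fun _ => ℕ) (fun _ => ℕ) with hE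
  rw [risk2, ← E.tsum_eq (fun xy => ENNReal.ofReal (prodPMF2 n p q xy * (mle2 n xy - L) ^ 2))]
  apply tsum_congr; intro z
  have h1 : prodPMF2 n p q (E z) = ∏ i, pois2 ((n:ℝ) * p i) ((n:ℝ) * q i) (z i) := by
    rw [prodPMF2, prodPMF, prodPMF, ← Finset.prod_mul_distrib]
    rfl
  have h2 : mle2 n (E z) = ∑ i, |((z i).1:ℝ)/(n:ℝ) - ((z i).2:ℝ)/(n:ℝ)| := rfl
  have hnn : ∀ i, (0:ℝ) ≤ pois2 ((n:ℝ) * p i) ((n:ℝ) * q i) (z i) := fun i =>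
    pois2_nonneg (mul_nonneg (Nat.cast_nonneg n) (hp i)) (mul_nonneg (Nat.cast_nonneg n) (hq i)) _
  rw [h1, h2, ENNReal.ofReal_mul (Finset.prod_nonneg fun i _ => hnn i),
    ENNReal.ofReal_prod_of_nonneg (fun i _ => hnn i)]

lemma coord_sum {n : ℕ} (hn : 0 < n) {p q : ℝ} (hp : 0 ≤ p) (hq : 0 ≤ q) :
    ∑' k : ℕ × ℕ, ENNReal.ofReal (pois2 ((n:ℝ)*p) ((n:ℝ)*q) k) *
      ENNReal.ofReal (2*((k.1:ℝ)/(n:ℝ) - p)^2 + 2*((k.2:ℝ)/(n:ℝ) - q)^2)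
      = ENNReal.ofReal (2*(p/(n:ℝ)) + 2*(q/(n:ℝ))) := by
  have ha : (0:ℝ) ≤ (n:ℝ)*p := by positivity
  have hb : (0:ℝ) ≤ (n:ℝ)*q := by positivity
  refine tsum_mul_ofReal (pois2_nonneg ha hb) ?_ (fun k => by positivity)
  have H1 := hs_sep ((central2 hn hp).mul_left 2) (pois_hasSum hb)
    (fun k => mul_nonneg (by norm_num) (mul_nonneg (pois_nonneg ha k) (sq_nonneg _)))
    (pois_nonneg hb)
  have H2 := hs_sep (pois_hasSum ha) ((central2 hn hq).mul_left 2)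
    (pois_nonneg ha)
    (fun k => mul_nonneg (by norm_num) (mul_nonneg (pois_nonneg hb k) (sq_nonneg _)))
  have H := H1.add H2
  have hfun : (fun k : ℕ × ℕ => pois2 ((n:ℝ)*p) ((n:ℝ)*q) k *
      (2*((k.1:ℝ)/(n:ℝ) - p)^2 + 2*((k.2:ℝ)/(n:ℝ) - q)^2))
      = fun k : ℕ × ℕ =>
        (2 * (poissonPMF ((n:ℝ)*p) k.1 * ((k.1:ℝ)/(n:ℝ) - p)^2)) * poissonPMF ((n:ℝ)*q) k.2 +
        poissonPMF ((n:ℝ)*p) k.1 * (2 * (poissonPMF ((n:ℝ)*q) k.2 * ((k.2:ℝ)/(n:ℝ) - q)^2)) := by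
    funext k; simp only [pois2]; ring
  have hval : 2*(p/(n:ℝ)) + 2*(q/(n:ℝ)) = 2*(p/(n:ℝ)) * 1 + 1 * (2*(q/(n:ℝ))) := by ring
  rw [hfun, hval]; exact H

lemma upper_bound {S n : ℕ} (hn : 0 < n) (p q : Fin S → ℝ) (hp : IsDist p) (hq : IsDist q) :
    risk2 n p q (L1dist p q) (mle2 n) ≤ ENNReal.ofReal (4 * S / n) := by
  obtain ⟨hp0, hp1⟩ := hp
  obtain ⟨hq0, hq1⟩ := hq
  have hn' : (0:ℝ) < n := Nat.cast_pos.mpr hn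
  rw [risk2_eq p q hp0 hq0]
  set W : (Fin S → ℕ × ℕ) → ℝ≥0∞ :=
    fun z => ∏ i, ENNReal.ofReal (pois2 ((n:ℝ) * p i) ((n:ℝ) * q i) (z i)) with hW
  set t : Fin S → ℕ × ℕ → ℝ :=
    fun i k => 2*((k.1:ℝ)/(n:ℝ) - p i)^2 + 2*((k.2:ℝ)/(n:ℝ) - q i)^2 with ht
  have htnn : ∀ i k, 0 ≤ t i k := fun i k => by positivity
  have hpt : ∀ z : Fin S → ℕ × ℕ,
      ((∑ i, |((z i).1:ℝ)/(n:ℝ) - ((z i).2:ℝ)/(n:ℝ)|) - L1dist p q)^2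
        ≤ (S:ℝ) * ∑ i, t i (z i) := by
    intro z
    have hterm : ∀ i : Fin S, |(|((z i).1:ℝ)/(n:ℝ) - ((z i).2:ℝ)/(n:ℝ)| - |p i - q i|)|
        ≤ |((z i).1:ℝ)/(n:ℝ) - p i| + |((z i).2:ℝ)/(n:ℝ) - q i| := by
      intro i
      refine (abs_abs_sub_abs_le_abs_sub _ _).trans ?_
      have h2 : (((z i).1:ℝ)/(n:ℝ) - ((z i).2:ℝ)/(n:ℝ)) - (p i - q i)
          = (((z i).1:ℝ)/(n:ℝ) - p i) - (((z i).2:ℝ)/(n:ℝ) - q i) := by ring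
      rw [h2]; exact abs_sub _ _
    have habs : |(∑ i, |((z i).1:ℝ)/(n:ℝ) - ((z i).2:ℝ)/(n:ℝ)|) - L1dist p q|
        ≤ ∑ i, (|((z i).1:ℝ)/(n:ℝ) - p i| + |((z i).2:ℝ)/(n:ℝ) - q i|) := by
      rw [L1dist, ← Finset.sum_sub_distrib]
      refine (Finset.abs_sum_le_sum_abs _ _).trans ?_
      exact Finset.sum_le_sum fun i _ => hterm i
    calc ((∑ i, |((z i).1:ℝ)/(n:ℝ) - ((z i).2:ℝ)/(n:ℝ)|) - L1dist p q)^2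
        = |(∑ i, |((z i).1:ℝ)/(n:ℝ) - ((z i).2:ℝ)/(n:ℝ)|) - L1dist p q|^2 := (sq_abs _).symm
      _ ≤ (∑ i, (|((z i).1:ℝ)/(n:ℝ) - p i| + |((z i).2:ℝ)/(n:ℝ) - q i|))^2 :=
          pow_le_pow_left₀ (abs_nonneg _) habs 2
      _ ≤ (Finset.univ.card : ℝ) *
            ∑ i, (|((z i).1:ℝ)/(n:ℝ) - p i| + |((z i).2:ℝ)/(n:ℝ) - q i|)^2 :=
          sq_sum_le_card_mul_sum_sq
      _ ≤ (S:ℝ) * ∑ i, t i (z i) := by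
          rw [Finset.card_univ, Fintype.card_fin]
          refine mul_le_mul_of_nonneg_left (Finset.sum_le_sum fun i _ => ?_) (by positivity)
          have h1 := sq_abs (((z i).1:ℝ)/(n:ℝ) - p i)
          have h2 := sq_abs (((z i).2:ℝ)/(n:ℝ) - q i)
          have h3 := sq_nonneg (|((z i).1:ℝ)/(n:ℝ) - p i| - |((z i).2:ℝ)/(n:ℝ) - q i|)
          simp only [ht]
          nlinarith
  have hfi : ∀ i : Fin S,
      ∑' k : ℕ × ℕ, ENNReal.ofReal (pois2 ((n:ℝ) * p i) ((n:ℝ) * q i) k) = 1 :=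
    fun i => pois2_mass' (mul_nonneg (Nat.cast_nonneg n) (hp0 i)) (mul_nonneg (Nat.cast_nonneg n) (hq0 i))
  calc ∑' z : Fin S → ℕ × ℕ, W z *
        ENNReal.ofReal ((∑ i, |((z i).1:ℝ)/(n:ℝ) - ((z i).2:ℝ)/(n:ℝ)| - L1dist p q)^2)
      ≤ ∑' z : Fin S → ℕ × ℕ, W z * ENNReal.ofReal ((S:ℝ) * ∑ i, t i (z i)) :=
        ENNReal.tsum_le_tsum fun z => mul_le_mul_right (ENNReal.ofReal_le_ofReal (hpt z)) _
    _ = ∑' z : Fin S → ℕ × ℕ, ∑ i, ENNReal.ofReal (S:ℝ) * (W z * ENNReal.ofReal (t i (z i))) := by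
        refine tsum_congr fun z => ?_
        rw [ENNReal.ofReal_mul (by positivity), ENNReal.ofReal_sum_of_nonneg
          (fun i _ => htnn i (z i)), Finset.mul_sum, Finset.mul_sum]
        exact Finset.sum_congr rfl fun i _ => by ring
    _ = ∑ i, ENNReal.ofReal (S:ℝ) *
          (∑' z : Fin S → ℕ × ℕ, W z * ENNReal.ofReal (t i (z i))) := by
        rw [Summable.tsum_finsetSum fun i _ => ENNReal.summable]
        exact Finset.sum_congr rfl fun i _ => ENNReal.tsum_mul_left
    _ = ∑ i, ENNReal.ofReal (S:ℝ) * ENNReal.ofReal (2*(p i/(n:ℝ)) + 2*(q i/(n:ℝ))) := by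
        refine Finset.sum_congr rfl fun i _ => ?_
        congr 1
        rw [hW]
        rw [tsum_pi_marginal (fun i k => ENNReal.ofReal (pois2 ((n:ℝ) * p i) ((n:ℝ) * q i) k))
          hfi i (fun k => ENNReal.ofReal (t i k))]
        exact coord_sum hn (hp0 i) (hq0 i)
    _ = ENNReal.ofReal (S:ℝ) * ENNReal.ofReal (∑ i, (2*(p i/(n:ℝ)) + 2*(q i/(n:ℝ)))) := by
        rw [← Finset.mul_sum, ENNReal.ofReal_sum_of_nonneg
          (fun i _ => by have h1 := hp0 i; have h2 := hq0 i; positivity)]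
    _ = ENNReal.ofReal (4 * S / n) := by
        have hsum : ∑ i, (2*(p i/(n:ℝ)) + 2*(q i/(n:ℝ))) = 4 / n := by
          rw [Finset.sum_add_distrib]
          have e1 : ∑ i, 2*(p i/(n:ℝ)) = 2/n * ∑ i, p i := by
            rw [Finset.mul_sum]; exact Finset.sum_congr rfl fun i _ => by ring
          have e2 : ∑ i, 2*(q i/(n:ℝ)) = 2/n * ∑ i, q i := by
            rw [Finset.mul_sum]; exact Finset.sum_congr rfl fun i _ => by ring
          rw [e1, e2, hp1, hq1]; ring
        rw [hsum, ← ENNReal.ofReal_mul (by positivity)]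
        congr 1; ring
lemma lower_bound {S n : ℕ} (hS : 0 < S) (hn : 0 < n) (hSn : (S:ℝ) ≤ (n:ℝ)) :
    ENNReal.ofReal (4/7 * S / n) ≤
      risk2 n (fun _ : Fin S => (S:ℝ)⁻¹) (fun _ : Fin S => (S:ℝ)⁻¹)
        (L1dist (fun _ : Fin S => (S:ℝ)⁻¹) (fun _ : Fin S => (S:ℝ)⁻¹)) (mle2 n) := by
  have hS' : (0:ℝ) < S := Nat.cast_pos.mpr hS
  have hn' : (0:ℝ) < n := Nat.cast_pos.mpr hn
  set lam : ℝ := (n:ℝ) * (S:ℝ)⁻¹ with hlam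
  have hlam1 : 1 ≤ lam := by
    rw [hlam, ← div_eq_mul_inv, le_div_iff₀ hS', one_mul]; exact hSn
  have hlam0 : (0:ℝ) < lam := lt_of_lt_of_le one_pos hlam1
  have hL : L1dist (fun _ : Fin S => (S:ℝ)⁻¹) (fun _ => (S:ℝ)⁻¹) = 0 := by simp [L1dist]
  set v : ℕ × ℕ → ℝ≥0∞ := fun k => ENNReal.ofReal (pois2 lam lam k) with hv
  set Z : ℕ × ℕ → ℝ := fun k => |(k.1:ℝ) - (k.2:ℝ)| with hZ
  have hZnn : ∀ k, 0 ≤ Z k := fun k => abs_nonneg _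
  set W : (Fin S → ℕ × ℕ) → ℝ≥0∞ := fun z => ∏ i, v (z i) with hW
  set A1 : ℝ≥0∞ := ∑' k : ℕ × ℕ, v k * ENNReal.ofReal (Z k) with hA1
  set A2 : ℝ≥0∞ := ∑' k : ℕ × ℕ, v k * ENNReal.ofReal (Z k ^ 2) with hA2
  set A3 : ℝ≥0∞ := ∑' k : ℕ × ℕ, v k * ENNReal.ofReal (Z k ^ 3) with hA3
  set A4 : ℝ≥0∞ := ∑' k : ℕ × ℕ, v k * ENNReal.ofReal (Z k ^ 4) with hA4
  have hvnn := pois2_nonneg hlam0.le hlam0.le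
  have hvmass : ∑' k : ℕ × ℕ, v k = 1 := pois2_mass' hlam0.le hlam0.le
  -- moment values
  have hA2v : A2 = ENNReal.ofReal (2 * lam) := by
    rw [hA2]
    refine tsum_mul_ofReal hvnn ?_ (fun k => by positivity)
    have H := skellam2 hlam0.le
    have hfun : (fun k : ℕ × ℕ => pois2 lam lam k * Z k ^ 2)
        = fun k : ℕ × ℕ => pois2 lam lam k * ((k.1:ℝ) - (k.2:ℝ))^2 := by
      funext k; rw [hZ]; rw [sq_abs]
    rw [hfun]; exact H
  have hA4v : A4 = ENNReal.ofReal (12 * lam^2 + 2 * lam) := by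
    rw [hA4]
    refine tsum_mul_ofReal hvnn ?_ (fun k => by positivity)
    have H := skellam4 hlam0.le
    have hfun : (fun k : ℕ × ℕ => pois2 lam lam k * Z k ^ 4)
        = fun k : ℕ × ℕ => pois2 lam lam k * ((k.1:ℝ) - (k.2:ℝ))^4 := by
      funext k; rw [hZ]
      rw [pow_abs, abs_of_nonneg (by positivity)]
    rw [hfun]; exact H
  -- Cauchy-Schwarz chain
  have CS1 : A2^2 ≤ A1 * A3 := by
    have h := tsum_cs v (fun k => ENNReal.ofReal (Real.sqrt (Z k)))
      (fun k => ENNReal.ofReal (Z k * Real.sqrt (Z k)))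
    have e1 : ∀ k : ℕ × ℕ, ENNReal.ofReal (Real.sqrt (Z k)) * ENNReal.ofReal (Z k * Real.sqrt (Z k))
        = ENNReal.ofReal (Z k ^ 2) := by
      intro k
      rw [← ENNReal.ofReal_mul (Real.sqrt_nonneg _)]
      congr 1
      have hs := Real.mul_self_sqrt (hZnn k)
      linear_combination Z k * hs
    have e2 : ∀ k : ℕ × ℕ, ENNReal.ofReal (Real.sqrt (Z k)) ^ 2 = ENNReal.ofReal (Z k) := by
      intro k
      rw [← ENNReal.ofReal_pow (Real.sqrt_nonneg _), Real.sq_sqrt (hZnn k)]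
    have e3 : ∀ k : ℕ × ℕ, ENNReal.ofReal (Z k * Real.sqrt (Z k)) ^ 2
        = ENNReal.ofReal (Z k ^ 3) := by
      intro k
      rw [← ENNReal.ofReal_pow (mul_nonneg (hZnn k) (Real.sqrt_nonneg _))]
      congr 1
      have hs := Real.mul_self_sqrt (hZnn k)
      linear_combination Z k * Z k * hs
    calc A2^2 = (∑' k : ℕ × ℕ, v k * (ENNReal.ofReal (Real.sqrt (Z k)) *
          ENNReal.ofReal (Z k * Real.sqrt (Z k))))^2 := by
          rw [hA2]; congr 1; exact tsum_congr fun k => by rw [e1 k]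
      _ ≤ (∑' k : ℕ × ℕ, v k * ENNReal.ofReal (Real.sqrt (Z k)) ^ 2) *
          (∑' k : ℕ × ℕ, v k * ENNReal.ofReal (Z k * Real.sqrt (Z k)) ^ 2) := h
      _ = A1 * A3 := by
          rw [hA1, hA3]; congr 1
          · exact tsum_congr fun k => by rw [e2 k]
          · exact tsum_congr fun k => by rw [e3 k]
  have CS2 : A3^2 ≤ A2 * A4 := by
    have h := tsum_cs v (fun k => ENNReal.ofReal (Z k)) (fun k => ENNReal.ofReal (Z k ^ 2))
    have e1 : ∀ k : ℕ × ℕ, ENNReal.ofReal (Z k) * ENNReal.ofReal (Z k ^ 2)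
        = ENNReal.ofReal (Z k ^ 3) := by
      intro k; rw [← ENNReal.ofReal_mul (hZnn k)]; congr 1; ring
    have e2 : ∀ k : ℕ × ℕ, ENNReal.ofReal (Z k) ^ 2 = ENNReal.ofReal (Z k ^ 2) := fun k =>
      (ENNReal.ofReal_pow (hZnn k) 2).symm
    have e3 : ∀ k : ℕ × ℕ, ENNReal.ofReal (Z k ^ 2) ^ 2 = ENNReal.ofReal (Z k ^ 4) := by
      intro k; rw [← ENNReal.ofReal_pow (by positivity)]; congr 1; ring
    calc A3^2 = (∑' k : ℕ × ℕ, v k * (ENNReal.ofReal (Z k) * ENNReal.ofReal (Z k ^ 2)))^2 := by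
          rw [hA3]; congr 1; exact tsum_congr fun k => by rw [e1 k]
      _ ≤ (∑' k : ℕ × ℕ, v k * ENNReal.ofReal (Z k) ^ 2) *
          (∑' k : ℕ × ℕ, v k * ENNReal.ofReal (Z k ^ 2) ^ 2) := h
      _ = A2 * A4 := by
          rw [hA2, hA4]; congr 1
          · exact tsum_congr fun k => by rw [e2 k]
          · exact tsum_congr fun k => by rw [e3 k]
  have hA2ne0 : A2 ≠ 0 := by
    rw [hA2v]; exact (ENNReal.ofReal_pos.mpr (by positivity)).ne'
  have hA2net : A2 ≠ ⊤ := by rw [hA2v]; exact ENNReal.ofReal_ne_top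
  have hA4ne0 : A4 ≠ 0 := by
    rw [hA4v]; exact (ENNReal.ofReal_pos.mpr (by positivity)).ne'
  have hA4net : A4 ≠ ⊤ := by rw [hA4v]; exact ENNReal.ofReal_ne_top
  have key : A2^3 ≤ A1^2 * A4 := by
    have h1 : A2^4 ≤ (A1 * A3) * (A1 * A3) := by
      calc A2^4 = A2^2 * A2^2 := by ring
        _ ≤ (A1 * A3) * (A1 * A3) := mul_le_mul' CS1 CS1
    have h2 : (A1 * A3) * (A1 * A3) = A1^2 * A3^2 := by ring
    have h3 : A1^2 * A3^2 ≤ A1^2 * (A2 * A4) := mul_le_mul_right CS2 _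
    have h4 : A2^3 * A2 ≤ (A1^2 * A4) * A2 := by
      calc A2^3 * A2 = A2^4 := by ring
        _ ≤ A1^2 * (A2 * A4) := by rw [← h2] at h3; exact h1.trans h3
        _ = (A1^2 * A4) * A2 := by ring
    exact (ENNReal.mul_le_mul_iff_left hA2ne0 hA2net).mp h4
  have hM1sq : A2^3 / A4 ≤ A1^2 :=
    (ENNReal.div_le_iff_le_mul (Or.inl hA4ne0) (Or.inl hA4net)).mpr key
  -- Jensen
  set est : (Fin S → ℕ × ℕ) → ℝ := fun z => ∑ i, |((z i).1:ℝ)/(n:ℝ) - ((z i).2:ℝ)/(n:ℝ)|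
    with hest
  have hestnn : ∀ z, 0 ≤ est z := fun z => Finset.sum_nonneg fun i _ => abs_nonneg _
  have hWmass : ∑' z : Fin S → ℕ × ℕ, W z = 1 := by
    rw [hW, tsum_pi_prod (fun _ k => v k)]
    simp [hvmass]
  have hJ : (∑' z : Fin S → ℕ × ℕ, W z * ENNReal.ofReal (est z))^2 ≤
      ∑' z : Fin S → ℕ × ℕ, W z * ENNReal.ofReal ((est z - 0)^2) := by
    have h := tsum_cs W (fun z => ENNReal.ofReal (est z)) (fun _ => 1)
    simp only [mul_one, one_pow] at h
    rw [hWmass, mul_one] at h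
    refine h.trans (le_of_eq (tsum_congr fun z => ?_))
    rw [sub_zero, ← ENNReal.ofReal_pow (hestnn z)]
  -- identify the inner expectation
  have hI : ∑' z : Fin S → ℕ × ℕ, W z * ENNReal.ofReal (est z)
      = (S : ℝ≥0∞) * (A1 * ENNReal.ofReal (1/(n:ℝ))) := by
    have hstep : ∀ z : Fin S → ℕ × ℕ, W z * ENNReal.ofReal (est z)
        = ∑ i, W z * ENNReal.ofReal (Z (z i) * (1/(n:ℝ))) := by
      intro z
      have heq : est z = ∑ i, Z (z i) * (1/(n:ℝ)) := by
        rw [hest]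
        refine Finset.sum_congr rfl fun i _ => ?_
        rw [hZ]
        have h : ((z i).1:ℝ)/(n:ℝ) - ((z i).2:ℝ)/(n:ℝ)
            = (((z i).1:ℝ) - ((z i).2:ℝ)) * (1/(n:ℝ)) := by ring
        rw [h, abs_mul, abs_of_nonneg (le_of_lt (one_div_pos.mpr hn'))]
      rw [heq, ENNReal.ofReal_sum_of_nonneg
        (fun i _ => mul_nonneg (hZnn _) (by positivity)), Finset.mul_sum]
    calc ∑' z : Fin S → ℕ × ℕ, W z * ENNReal.ofReal (est z)
        = ∑' z : Fin S → ℕ × ℕ, ∑ i, W z * ENNReal.ofReal (Z (z i) * (1/(n:ℝ))) :=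
          tsum_congr hstep
      _ = ∑ i : Fin S, ∑' z : Fin S → ℕ × ℕ, W z * ENNReal.ofReal (Z (z i) * (1/(n:ℝ))) :=
          Summable.tsum_finsetSum fun i _ => ENNReal.summable
      _ = ∑ i : Fin S, ∑' k : ℕ × ℕ, v k * ENNReal.ofReal (Z k * (1/(n:ℝ))) := by
          refine Finset.sum_congr rfl fun i _ => ?_
          rw [hW]
          exact tsum_pi_marginal (fun _ k => v k) (fun _ => hvmass) i
            (fun k => ENNReal.ofReal (Z k * (1/(n:ℝ))))
      _ = ∑ i : Fin S, A1 * ENNReal.ofReal (1/(n:ℝ)) := by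
          refine Finset.sum_congr rfl fun i _ => ?_
          rw [hA1, ← ENNReal.tsum_mul_right]
          refine tsum_congr fun k => ?_
          rw [ENNReal.ofReal_mul (hZnn k), mul_assoc]
      _ = (S : ℝ≥0∞) * (A1 * ENNReal.ofReal (1/(n:ℝ))) := by
          rw [Finset.sum_const, Finset.card_univ, Fintype.card_fin, nsmul_eq_mul]
  -- final chain
  have hfinal : ENNReal.ofReal (4/7 * S / n) ≤
      ((S : ℝ≥0∞) * (A1 * ENNReal.ofReal (1/(n:ℝ))))^2 := by
    have hA1sq : ENNReal.ofReal ((2*lam)^3 / (12*lam^2 + 2*lam)) ≤ A1^2 := by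
      calc ENNReal.ofReal ((2*lam)^3 / (12*lam^2 + 2*lam))
          = ENNReal.ofReal ((2*lam)^3) / ENNReal.ofReal (12*lam^2 + 2*lam) :=
            ENNReal.ofReal_div_of_pos (by positivity)
        _ = A2^3 / A4 := by
            rw [hA2v, hA4v, ← ENNReal.ofReal_pow (by positivity)]
        _ ≤ A1^2 := hM1sq
    calc ENNReal.ofReal (4/7 * S / n)
        ≤ ENNReal.ofReal ((S:ℝ)^2 * ((2*lam)^3 / (12*lam^2 + 2*lam)) * (1/(n:ℝ))^2) := by
          apply ENNReal.ofReal_le_ofReal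
          have h14 : 12*lam^2 + 2*lam ≤ 14*lam^2 := by nlinarith
          have hd : (0:ℝ) < 12*lam^2 + 2*lam := by positivity
          have hquot : 4/7*lam ≤ (2*lam)^3 / (12*lam^2 + 2*lam) := by
            rw [le_div_iff₀ hd]; nlinarith
          have heq : (4:ℝ)/7 * S / n = (S:ℝ)^2 * (4/7*lam) * (1/(n:ℝ))^2 := by
            rw [hlam]; field_simp
          rw [heq]
          apply mul_le_mul_of_nonneg_right _ (by positivity)
          exact mul_le_mul_of_nonneg_left hquot (by positivity)
      _ = ENNReal.ofReal ((S:ℝ)^2) * ENNReal.ofReal ((2*lam)^3 / (12*lam^2 + 2*lam)) *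
            ENNReal.ofReal ((1/(n:ℝ))^2) := by
          rw [← ENNReal.ofReal_mul (by positivity), ← ENNReal.ofReal_mul (by positivity)]
      _ ≤ ENNReal.ofReal ((S:ℝ)^2) * A1^2 * ENNReal.ofReal ((1/(n:ℝ))^2) :=
          mul_le_mul' (mul_le_mul_right hA1sq _) le_rfl
      _ = ((S : ℝ≥0∞) * (A1 * ENNReal.ofReal (1/(n:ℝ))))^2 := by
          rw [ENNReal.ofReal_pow (Nat.cast_nonneg S), ENNReal.ofReal_pow
            (by positivity : (0:ℝ) ≤ 1/(n:ℝ)), ENNReal.ofReal_natCast]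
          ring
  have hrisk : risk2 n (fun _ : Fin S => (S:ℝ)⁻¹) (fun _ : Fin S => (S:ℝ)⁻¹)
      (L1dist (fun _ : Fin S => (S:ℝ)⁻¹) (fun _ : Fin S => (S:ℝ)⁻¹)) (mle2 n)
      = ∑' z : Fin S → ℕ × ℕ, W z * ENNReal.ofReal ((est z - 0)^2) := by
    rw [hL, risk2_eq (fun _ => (S:ℝ)⁻¹) (fun _ => (S:ℝ)⁻¹)
      (fun _ => inv_nonneg.mpr (Nat.cast_nonneg S)) (fun _ => inv_nonneg.mpr (Nat.cast_nonneg S))]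
  rw [hrisk]
  calc ENNReal.ofReal (4/7 * S / n)
      ≤ ((S : ℝ≥0∞) * (A1 * ENNReal.ofReal (1/(n:ℝ))))^2 := hfinal
    _ = (∑' z : Fin S → ℕ × ℕ, W z * ENNReal.ofReal (est z))^2 := by rw [hI]
    _ ≤ ∑' z : Fin S → ℕ × ℕ, W z * ENNReal.ofReal ((est z - 0)^2) := hJ

end MleAux

/-- for `n ≳ S`, the worst-case risk of the two-sample MLE is of order `S/n`. -/
theorem mle2_risk_order : ∃ c C c₀ : ℝ, 0 < c ∧ c ≤ C ∧ 1 ≤ c₀ ∧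
    ∀ S n : ℕ, 0 < S → 0 < n → c₀ * S ≤ n →
      ENNReal.ofReal (c * S / n) ≤
        (⨆ pq : {p : Fin S → ℝ // IsDist p} × {q : Fin S → ℝ // IsDist q},
          risk2 n pq.1.1 pq.2.1 (L1dist pq.1.1 pq.2.1) (mle2 n)) ∧
      (⨆ pq : {p : Fin S → ℝ // IsDist p} × {q : Fin S → ℝ // IsDist q},
          risk2 n pq.1.1 pq.2.1 (L1dist pq.1.1 pq.2.1) (mle2 n)) ≤
        ENNReal.ofReal (C * S / n) := by
  refine ⟨4/7, 4, 1, by norm_num, by norm_num, le_refl 1, ?_⟩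
  intro S n hS hn hc
  have hSn : (S:ℝ) ≤ (n:ℝ) := by rw [one_mul] at hc; exact hc
  have hu : IsDist (fun _ : Fin S => (S:ℝ)⁻¹) := by
    constructor
    · intro i; exact inv_nonneg.mpr (Nat.cast_nonneg S)
    · rw [Finset.sum_const, Finset.card_univ, Fintype.card_fin, nsmul_eq_mul]
      exact mul_inv_cancel₀ (Nat.cast_ne_zero.mpr hS.ne')
  constructor
  · refine (MleAux.lower_bound hS hn hSn).trans ?_
    exact le_iSup (fun pq : {p : Fin S → ℝ // IsDist p} × {q : Fin S → ℝ // IsDist q} =>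
      risk2 n pq.1.1 pq.2.1 (L1dist pq.1.1 pq.2.1) (mle2 n)) ⟨⟨_, hu⟩, ⟨_, hu⟩⟩
  · exact iSup_le fun pq => MleAux.upper_bound hn pq.1.1 pq.2.1 pq.1.2 pq.2.2
end

section
/- For every constant A > 0 there exists a constant C > 0 such that the following holds for every integer K ≥ 1. If Q is a real polynomial of degree at most K that is an even function, satisfies Q(0) = 0, and satisfies max_{t∈[−1,1]} |Q(t) − |t|| ≤ A/K, then for all t ∈ [−1,1]: | |t| − |Q(t) − |t|| | ≤ C·K·t². -/
set_option maxHeartbeats 1000000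

open scoped BigOperators

namespace PPB17
open Polynomial Finset Real

lemma coeff_comp_neg_X (p : ℝ[X]) (m : ℕ) : (p.comp (-X)).coeff m = (-1)^m * p.coeff m := by
  induction p using Polynomial.induction_on' with
  | add f g hf hg => simp [add_comp, hf, hg, mul_add]
  | monomial n a =>
      have hc : ((-1 : ℝ[X]))^n = C ((-1:ℝ)^n) := by
        rw [C_pow, C_neg, C_1]
      rw [monomial_comp, neg_pow, hc, ← C_mul_X_pow_eq_monomial, mul_left_comm,
        coeff_C_mul, coeff_C_mul, coeff_X_pow]
      rcases eq_or_ne m n with rfl | h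
      · simp [mul_comm]
      · simp [h]

lemma even_decomp (Q : ℝ[X]) (K : ℕ) (hdeg : Q.natDegree ≤ K)
    (heven : ∀ t : ℝ, Q.eval (-t) = Q.eval t) (h0 : Q.eval 0 = 0) :
    ∃ H : ℝ[X], H.natDegree ≤ K ∧ ∀ t : ℝ, Q.eval t = t^2 * H.eval (t^2) := by
  have hcomp : Q.comp (-X) = Q := by
    apply Polynomial.funext
    intro t
    rw [eval_comp]
    simp [heven t]
  have hodd : ∀ m : ℕ, Odd m → Q.coeff m = 0 := by
    intro m hm
    have h := coeff_comp_neg_X Q m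
    rw [hcomp, hm.neg_one_pow] at h
    linarith
  have h0' : Q.coeff 0 = 0 := by rw [coeff_zero_eq_eval_zero]; exact h0
  refine ⟨∑ i ∈ range (K+1), C (Q.coeff (2*i+2)) * X^i, ?_, ?_⟩
  · apply natDegree_sum_le_of_forall_le
    intro i hi
    simp only [mem_range] at hi
    refine le_trans (natDegree_C_mul_le _ _) ?_
    rw [natDegree_X_pow]; omega
  · intro t
    have hq : Q.eval t = ∑ i ∈ range (2*K+4), Q.coeff i * t^i :=
      eval_eq_sum_range' (by omega) t
    have hH : (∑ i ∈ range (K+1), C (Q.coeff (2*i+2)) * X^i).eval (t^2)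
        = ∑ i ∈ range (K+1), Q.coeff (2*i+2) * (t^2)^i := by
      rw [eval_finset_sum]
      exact Finset.sum_congr rfl fun i _ => by simp
    rw [hq, hH, Finset.mul_sum]
    have him : (range (K+1)).image (fun i => 2*i+2) ⊆ range (2*K+4) := by
      intro x hx
      simp only [mem_image, mem_range] at hx ⊢
      omega
    rw [← Finset.sum_subset him ?_]
    · rw [Finset.sum_image (by intro a _ b _ h; simp only at h; omega)]
      exact Finset.sum_congr rfl fun i _ => by ring
    · intro i hi hni
      simp only [mem_image, mem_range] at hni
      rcases Nat.even_or_odd i with he | ho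
      · rcases Nat.eq_zero_or_pos i with rfl | hpos
        · simp [h0']
        · obtain ⟨c, hc⟩ := he
          simp only [mem_range] at hi
          exact absurd ⟨c-1, by omega, by omega⟩ hni
      · simp [hodd i ho]

lemma T_at_node (n : ℕ) (hn : 1 ≤ n) (j : ℕ) :
    (Chebyshev.T ℝ (n:ℤ)).eval (Real.cos (j * π / n)) = (-1)^j := by
  have hn0 : (n:ℝ) ≠ 0 := by positivity
  rw [Chebyshev.T_real_cos]
  have h : ((n:ℤ):ℝ) * ((j:ℝ) * π / n) = (j:ℝ) * π - 0 := by
    push_cast; field_simp; simp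
  rw [h, Real.cos_nat_mul_pi_sub]
  simp

lemma deg_le_one_zero (Q : ℝ[X]) (h1 : Q.natDegree ≤ 1)
    (heven : ∀ t : ℝ, Q.eval (-t) = Q.eval t) (h0 : Q.eval 0 = 0) (t : ℝ) :
    Q.eval t = 0 := by
  have hcomp : Q.comp (-X) = Q := by
    apply Polynomial.funext
    intro r
    rw [eval_comp]
    simp [heven r]
  have hc1 : Q.coeff 1 = 0 := by
    have h := coeff_comp_neg_X Q 1
    rw [hcomp] at h
    simp at h
    linarith
  have hc0 : Q.coeff 0 = 0 := by rw [coeff_zero_eq_eval_zero]; exact h0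
  rw [eval_eq_sum_range' (show Q.natDegree < 2 by omega) t]
  simp [Finset.sum_range_succ, hc0, hc1]

lemma T_natDegree_le : ∀ n : ℕ, (Chebyshev.T ℝ (n : ℤ)).natDegree ≤ n := by
  intro n
  induction n using Nat.strong_induction_on with
  | _ n ih =>
    match n with
    | 0 => simp [Chebyshev.T_zero]
    | 1 => simp [Chebyshev.T_one]
    | (n+2) =>
      have h := Chebyshev.T_add_two ℝ (n : ℤ)
      have : ((n:ℤ) + 2) = ((n+2 : ℕ) : ℤ) := by push_cast; ring
      rw [this] at h
      rw [h]
      refine le_trans (natDegree_sub_le _ _) ?_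
      have h1 : (2 * X * Chebyshev.T ℝ ((n+1:ℕ) : ℤ)).natDegree ≤ n + 2 := by
        refine le_trans (natDegree_mul_le) ?_
        have : ((2 : ℝ[X]) * X).natDegree ≤ 1 := by compute_degree
        have h2 := ih (n+1) (by omega)
        omega
      have h2 : (Chebyshev.T ℝ (n : ℤ)).natDegree ≤ n + 2 := le_trans (ih n (by omega)) (by omega)
      have : ((n:ℤ) + 1) = ((n+1 : ℕ) : ℤ) := by push_cast; ring
      rw [this]
      omega

lemma T_eval_one (n : ℤ) : (Chebyshev.T ℝ n).eval 1 = 1 := by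
  have := Chebyshev.T_real_cos 0 n
  simpa using this

lemma T_closed_form {y : ℝ} (hy : 1 ≤ y) :
    ∀ n : ℕ, (Chebyshev.T ℝ (n : ℤ)).eval y
      = ((y + Real.sqrt (y^2-1))^n + (y - Real.sqrt (y^2-1))^n)/2 := by
  have h1 : (0:ℝ) ≤ y^2 - 1 := by nlinarith
  have hs : Real.sqrt (y^2-1) ^ 2 = y^2 - 1 := Real.sq_sqrt h1
  set s := Real.sqrt (y^2-1)
  have hφ : (y + s)^2 = 2*y*(y+s) - 1 := by nlinarith [hs]
  have hψ : (y - s)^2 = 2*y*(y-s) - 1 := by nlinarith [hs]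
  intro n
  induction n using Nat.strong_induction_on with
  | _ n ih =>
    match n with
    | 0 => norm_num [Chebyshev.T_zero]
    | 1 => norm_num [Chebyshev.T_one]
    | (n+2) =>
      have h := Chebyshev.T_add_two ℝ (n : ℤ)
      have hc2 : ((n:ℤ) + 2) = ((n+2 : ℕ) : ℤ) := by push_cast; ring
      have hc1 : ((n:ℤ) + 1) = ((n+1 : ℕ) : ℤ) := by push_cast; ring
      rw [hc2, hc1] at h
      rw [h]
      simp only [eval_sub, eval_mul, eval_X, eval_ofNat]
      rw [ih (n+1) (by omega), ih n (by omega)]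
      have e1 : (y+s)^(n+2) = (y+s)^n * ((y+s)^2) := by ring
      have e2 : (y-s)^(n+2) = (y-s)^n * ((y-s)^2) := by ring
      rw [e1, e2, hφ, hψ]
      ring

lemma cheb_growth (n : ℕ) (hn : 1 ≤ n) (p : ℝ[X]) (hdeg : p.natDegree ≤ n) (M : ℝ)
    (hb : ∀ x ∈ Set.Icc (-1:ℝ) 1, |p.eval x| ≤ M) {y : ℝ} (hy : 1 ≤ y)
    (hTdeg : (Chebyshev.T ℝ (n:ℤ)).natDegree ≤ n)
    (hTval : ∀ j : ℕ, (Chebyshev.T ℝ (n:ℤ)).eval (Real.cos (j * π / n)) = (-1)^j) :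
    |p.eval y| ≤ M * (Chebyshev.T ℝ (n:ℤ)).eval y := by
  classical
  have hn0 : (0:ℝ) < n := by exact_mod_cast hn
  set v : ℕ → ℝ := fun j => Real.cos (j * π / n) with hv
  set s : Finset ℕ := range (n+1) with hs
  -- nodes are in [0, π] and strictly decreasing
  have hθ : ∀ j : ℕ, j ≤ n → (j:ℝ) * π / n ∈ Set.Icc 0 π := by
    intro j hj
    constructor
    · positivity
    · rw [div_le_iff₀ hn0]
      have : (j:ℝ) ≤ n := by exact_mod_cast hj
      nlinarith [Real.pi_pos]
  have hmono : ∀ j k : ℕ, j < k → k ≤ n → v k < v j := by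
    intro j k hjk hk
    apply Real.strictAntiOn_cos (hθ j (by omega)) (hθ k hk)
    have hj' : (j:ℝ) < k := by exact_mod_cast hjk
    rw [div_lt_div_iff₀ hn0 hn0]
    have := mul_lt_mul_of_pos_right hj' (mul_pos Real.pi_pos hn0)
    nlinarith [this]
  have hinj : Set.InjOn v ↑s := by
    intro a ha b hb' hab
    simp only [hs, coe_range, Set.mem_Iio] at ha hb'
    by_contra hne
    rcases lt_or_gt_of_ne hne with h | h
    · exact absurd hab (ne_of_gt (hmono a b h (by omega)))
    · exact absurd hab.symm (ne_of_gt (hmono b a h (by omega)))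
  have hvIcc : ∀ j : ℕ, v j ∈ Set.Icc (-1:ℝ) 1 :=
    fun j => ⟨Real.neg_one_le_cos _, Real.cos_le_one _⟩
  have hvley : ∀ j : ℕ, v j ≤ y := fun j => le_trans (hvIcc j).2 hy
  -- basis evaluations
  set B : ℕ → ℝ := fun i => (Lagrange.basis s v i).eval y with hB
  have hBeval : ∀ i, B i = ∏ j ∈ s.erase i, ((v i - v j)⁻¹ * (y - v j)) := by
    intro i
    simp [hB, Lagrange.basis, Lagrange.basisDivisor, eval_prod]
  have hsplit : ∀ i ∈ s, s.erase i = range i ∪ Ico (i+1) (n+1) := by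
    intro i hi
    simp only [hs, mem_range] at hi
    ext j
    simp only [mem_erase, mem_range, mem_union, mem_Ico, hs]
    omega
  have hsign : ∀ i ∈ s, (-1:ℝ)^i * B i = |B i| := by
    intro i hi
    have hi' : i ≤ n := by simpa [hs, Nat.lt_succ_iff] using hi
    have key : (-1:ℝ)^i * B i =
        (∏ j ∈ range i, (-((v i - v j)⁻¹ * (y - v j)))) *
        (∏ j ∈ Ico (i+1) (n+1), ((v i - v j)⁻¹ * (y - v j))) := by
      rw [hBeval i, hsplit i hi, prod_union (by
        simp only [disjoint_left, mem_range, mem_Ico]; omega)]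
      have : ∏ j ∈ range i, (-((v i - v j)⁻¹ * (y - v j)))
          = (-1:ℝ)^i * ∏ j ∈ range i, ((v i - v j)⁻¹ * (y - v j)) := by
        have e : ∀ j ∈ range i, -((v i - v j)⁻¹ * (y - v j)) = (-1) * ((v i - v j)⁻¹ * (y - v j)) := by
          intro j _; ring
        rw [prod_congr rfl e, prod_mul_distrib, prod_const, card_range]
      rw [this]; ring
    have hpos : 0 ≤ (-1:ℝ)^i * B i := by
      rw [key]
      apply mul_nonneg
      · apply prod_nonneg
        intro j hj
        simp only [mem_range] at hj
        have h1 : v i < v j := hmono j i hj hi'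
        have : (v i - v j)⁻¹ ≤ 0 := inv_nonpos.mpr (by linarith)
        have h2 : 0 ≤ y - v j := by linarith [hvley j]
        nlinarith
      · apply prod_nonneg
        intro j hj
        simp only [mem_Ico] at hj
        have h1 : v j < v i := hmono i j (by omega) (by omega)
        have : 0 ≤ (v i - v j)⁻¹ := inv_nonneg.mpr (by linarith)
        have h2 : 0 ≤ y - v j := by linarith [hvley j]
        positivity
    have : |B i| = |(-1:ℝ)^i * B i| := by
      rw [abs_mul, abs_pow, abs_neg, abs_one, one_pow, one_mul]
    rw [this, abs_of_nonneg hpos]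
  -- interpolation identities
  have hcard : (#s : WithBot ℕ) = ((n+1 : ℕ) : WithBot ℕ) := by simp [hs]
  have hdegp : p.degree < #s := by
    refine lt_of_le_of_lt degree_le_natDegree ?_
    rw [hcard]; exact_mod_cast Nat.lt_succ_of_le hdeg
  have hdegT : (Chebyshev.T ℝ (n:ℤ)).degree < #s := by
    refine lt_of_le_of_lt degree_le_natDegree ?_
    rw [hcard]; exact_mod_cast Nat.lt_succ_of_le hTdeg
  have hinterp : ∀ f : ℝ[X], f.degree < #s →
      f.eval y = ∑ i ∈ s, f.eval (v i) * B i := by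
    intro f hf
    conv_lhs => rw [Lagrange.eq_interpolate hinj hf]
    simp [Lagrange.interpolate_apply, eval_finset_sum, hB]
  have hTsum : (Chebyshev.T ℝ (n:ℤ)).eval y = ∑ i ∈ s, (-1:ℝ)^i * B i := by
    rw [hinterp _ hdegT]
    exact Finset.sum_congr rfl fun i _ => by rw [hTval i]
  have hM : 0 ≤ M := le_trans (abs_nonneg _) (hb 1 (by norm_num))
  calc |p.eval y| = |∑ i ∈ s, p.eval (v i) * B i| := by rw [hinterp _ hdegp]
    _ ≤ ∑ i ∈ s, |p.eval (v i) * B i| := Finset.abs_sum_le_sum_abs _ _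
    _ ≤ ∑ i ∈ s, M * |B i| := by
        apply Finset.sum_le_sum
        intro i hi
        rw [abs_mul]
        exact mul_le_mul_of_nonneg_right (hb _ (hvIcc i)) (abs_nonneg _)
    _ = M * ∑ i ∈ s, (-1:ℝ)^i * B i := by
        rw [mul_sum]
        exact Finset.sum_congr rfl fun i hi => by rw [hsign i hi]
    _ = M * (Chebyshev.T ℝ (n:ℤ)).eval y := by rw [hTsum]

end PPB17

open Polynomial Finset Real PPB17 in
/-- any even polynomial `Q` of degree at most `K` with `Q(0) = 0` achieving
uniform error `≤ A/K` in approximating `|t|` on `[-1,1]` satisfies a pointwise bound: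
`| |t| − |Q(t) − |t|| | ≤ C·K·t²` on `[-1,1]`. -/
theorem pointwise_poly_bound (A : ℝ) (hA : 0 < A) :
    ∃ C : ℝ, 0 < C ∧
      ∀ K : ℕ, 1 ≤ K → ∀ Q : Polynomial ℝ, Q.natDegree ≤ K →
        (∀ t : ℝ, Q.eval (-t) = Q.eval t) → Q.eval 0 = 0 →
        (∀ t ∈ Set.Icc (-1 : ℝ) 1, abs (Q.eval t - |t|) ≤ A / K) →
        ∀ t ∈ Set.Icc (-1 : ℝ) 1,
          abs (|t| - abs (Q.eval t - |t|)) ≤ C * K * t ^ 2 := by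
  have hexp1 : (1:ℝ) ≤ Real.exp 4 := by nlinarith [Real.add_one_le_exp (4:ℝ)]
  refine ⟨(1+A) * Real.exp 4, by positivity, ?_⟩
  intro K hK Q hQdeg heven h0 happ t ht
  have hKR : (1:ℝ) ≤ (K:ℝ) := by exact_mod_cast hK
  have hKpos : (0:ℝ) < K := by linarith
  -- reduction to bounding |Q.eval t|
  have hred : abs (|t| - abs (Q.eval t - |t|)) ≤ |Q.eval t| := by
    have h := abs_abs_sub_abs_le_abs_sub (|t|) (|t| - Q.eval t)
    rw [abs_abs] at h
    have e1 : abs (|t| - Q.eval t) = abs (Q.eval t - |t|) := abs_sub_comm _ _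
    have e2 : |t| - (|t| - Q.eval t) = Q.eval t := by ring
    rw [e1, e2] at h
    exact h
    -- note: rewriting e1 inside h
  rcases eq_or_lt_of_le hK with hK1 | hK2
  · -- K = 1 : Q = 0
    have hQ0 : Q.eval t = 0 := deg_le_one_zero Q (by omega) heven h0 t
    rw [hQ0]
    simp only [zero_sub, abs_neg, abs_abs, sub_self, abs_zero]
    positivity
  have hK2' : (2:ℝ) ≤ (K:ℝ) := by exact_mod_cast hK2
  -- the two regions
  rcases le_or_gt (|t|) ((K:ℝ))⁻¹ with hHard | hEasy
  · -- hard region : |t| ≤ 1/K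
    obtain ⟨H, hHdeg, hHeval⟩ := even_decomp Q K hQdeg heven h0
    set a : ℝ := ((K:ℝ)^2)⁻¹ with ha_def
    have haK : a * (K:ℝ)^2 = 1 := by
      rw [ha_def]; field_simp
    have ha0 : 0 < a := by positivity
    have hK4 : (4:ℝ) ≤ (K:ℝ)^2 := by nlinarith
    have ha4 : a ≤ 1/4 := by nlinarith [mul_le_mul_of_nonneg_left hK4 ha0.le]
    have h1a : 0 < 1 - a := by linarith
    -- bound for H on [a,1]
    have hHmid : ∀ w ∈ Set.Icc a 1, |H.eval w| ≤ (1+A)*K := by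
      intro w hw
      have hw0 : 0 < w := lt_of_lt_of_le ha0 hw.1
      set sw := Real.sqrt w with hsw_def
      have hsw0 : 0 ≤ sw := Real.sqrt_nonneg _
      have hswsq : sw^2 = w := Real.sq_sqrt hw0.le
      have hsw1 : sw ≤ 1 := by
        rw [hsw_def, show (1:ℝ) = Real.sqrt 1 by simp]
        exact Real.sqrt_le_sqrt hw.2
      have hmem : sw ∈ Set.Icc (-1:ℝ) 1 := ⟨by linarith, hsw1⟩
      have h1 : abs (Q.eval sw - |sw|) ≤ A/K := happ sw hmem
      have h2 : Q.eval sw = w * H.eval w := by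
        have := hHeval sw
        rwa [hswsq] at this
      have habs : |sw| = sw := abs_of_nonneg hsw0
      have h3 : |Q.eval sw| ≤ sw + A/K := by
        have h1' : |Q.eval sw - sw| ≤ A/K := by rwa [habs] at h1
        have htri := abs_add_le (Q.eval sw - sw) sw
        rw [sub_add_cancel, abs_of_nonneg hsw0] at htri
        linarith
      have h4 : w * |H.eval w| ≤ sw + A/K := by
        have : |Q.eval sw| = w * |H.eval w| := by
          rw [h2, abs_mul, abs_of_pos hw0]
        linarith [h3, this.symm.le, this.le]
      -- 1/K ≤ sw
      have h5 : 1 ≤ (K:ℝ) * sw := by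
        have hle : Real.sqrt a ≤ sw := Real.sqrt_le_sqrt hw.1
        have hsa : Real.sqrt a = ((K:ℝ))⁻¹ := by
          rw [ha_def, Real.sqrt_inv, Real.sqrt_sq hKpos.le]
        rw [hsa] at hle
        have h := mul_le_mul_of_nonneg_left hle hKpos.le
        rwa [mul_inv_cancel₀ (ne_of_gt hKpos)] at h
      have h6 : sw ≤ (K:ℝ) * w := by
        nlinarith [mul_nonneg hsw0 (show (0:ℝ) ≤ (K:ℝ)*sw - 1 by linarith)]
      have h1Kw : 1 ≤ (K:ℝ)^2 * w := by
        nlinarith [mul_le_mul_of_nonneg_left hw.1 (sq_nonneg (K:ℝ))]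
      have h7 : A/K ≤ A * K * w := by
        rw [div_le_iff₀ hKpos]
        nlinarith [mul_le_mul_of_nonneg_left h1Kw hA.le]
      have h8 : w * |H.eval w| ≤ ((1+A)*K) * w := by nlinarith
      exact le_of_mul_le_mul_right (by linarith [h8]) hw0
    -- polynomials p and q
    set p : ℝ[X] := H.comp (C ((1-a)/2) * X + C ((1+a)/2)) with hp_def
    set q : ℝ[X] := p.comp (-X) with hq_def
    have hpdeg : p.natDegree ≤ K := by
      refine le_trans natDegree_comp_le ?_
      calc H.natDegree * (C ((1-a)/2) * X + C ((1+a)/2)).natDegree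
          ≤ K * 1 := Nat.mul_le_mul hHdeg (natDegree_linear_le)
        _ = K := by omega
    have hqdeg : q.natDegree ≤ K := by
      refine le_trans natDegree_comp_le ?_
      have h2 : (-X : ℝ[X]).natDegree = 1 := by
        rw [natDegree_neg, natDegree_X]
      rw [h2, mul_one]
      exact hpdeg
    have hqeval : ∀ x : ℝ, q.eval x = H.eval ((1-a)/2 * (-x) + (1+a)/2) := by
      intro x
      rw [hq_def, eval_comp, hp_def, eval_comp]
      simp
    have hqb : ∀ x ∈ Set.Icc (-1:ℝ) 1, |q.eval x| ≤ (1+A)*K := by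
      intro x hx
      rw [hqeval x]
      apply hHmid
      constructor
      · nlinarith [hx.1, hx.2]
      · nlinarith [hx.1, hx.2]
    set u : ℝ := t^2 with hu_def
    have hu0 : 0 ≤ u := sq_nonneg t
    have hua : u ≤ a := by
      have h1 : |t|^2 ≤ ((K:ℝ)⁻¹)^2 := by
        nlinarith [abs_nonneg t, hHard]
      rw [sq_abs] at h1
      rw [hu_def, ha_def, ← inv_pow]
      exact h1
    set y : ℝ := (1 + a - 2*u)/(1-a) with hy_def
    have hy1 : 1 ≤ y := by
      rw [hy_def, le_div_iff₀ h1a]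
      linarith
    have hqy : q.eval y = H.eval u := by
      rw [hqeval y, hy_def]
      congr 1
      field_simp
      ring
    have hcheb := cheb_growth K hK q hqdeg ((1+A)*(K:ℝ)) hqb hy1
      (T_natDegree_le K) (T_at_node K hK)
    set sy : ℝ := Real.sqrt (y^2 - 1) with hsy_def
    have hTcf := T_closed_form hy1 K
    have hsy0 : 0 ≤ sy := Real.sqrt_nonneg _
    have hsysq : sy^2 = y^2 - 1 := Real.sq_sqrt (by nlinarith)
    have hsyley : sy ≤ y := by nlinarith
    have hTle : (Chebyshev.T ℝ (K:ℤ)).eval y ≤ (y + sy)^K := by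
      rw [hTcf]
      have h1 : (y - sy)^K ≤ (y + sy)^K := pow_le_pow_left₀ (by linarith) (by linarith) K
      linarith
    set iK : ℝ := ((K:ℝ))⁻¹ with hiK_def
    have hiKpos : 0 < iK := inv_pos.mpr hKpos
    have hiK : (K:ℝ) * iK = 1 := mul_inv_cancel₀ (ne_of_gt hKpos)
    have haiK : a = iK^2 := by rw [ha_def, hiK_def, inv_pow]
    have hyub : y ≤ 1 + (8/3)*a := by
      rw [hy_def, div_le_iff₀ h1a]
      nlinarith [mul_nonneg ha0.le (show (0:ℝ) ≤ 1/4 - a by linarith)]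
    have hsyub : sy ≤ (8/3)*iK := by
      have h1 : y^2 - 1 ≤ ((8/3)*iK)^2 := by
        nlinarith [mul_nonneg ha0.le (show (0:ℝ) ≤ 1/4 - a by linarith), haiK, hy1]
      rw [hsy_def]
      calc Real.sqrt (y^2-1) ≤ Real.sqrt (((8/3)*iK)^2) := Real.sqrt_le_sqrt h1
        _ = (8/3)*iK := Real.sqrt_sq (by positivity)
    have hiK2 : iK ≤ 1/2 := by nlinarith
    have hphiub : y + sy ≤ 1 + 4*iK := by
      nlinarith [mul_nonneg hiKpos.le (show (0:ℝ) ≤ 1/2 - iK by linarith)]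
    have hphiK : (y + sy)^K ≤ Real.exp 4 := by
      have h1 : (y+sy)^K ≤ (1+4*iK)^K := pow_le_pow_left₀ (by linarith) hphiub K
      have h2 : (1+4*iK)^K ≤ (Real.exp (4*iK))^K :=
        pow_le_pow_left₀ (by positivity) (by linarith [Real.add_one_le_exp (4*iK)]) K
      have h3 : (Real.exp (4*iK))^K = Real.exp 4 := by
        rw [← Real.exp_nat_mul]
        congr 1
        rw [hiK_def]
        field_simp
      linarith
    have hMpos : (0:ℝ) ≤ (1+A)*(K:ℝ) := by positivity
    have hHu : |H.eval u| ≤ (1+A)*(K:ℝ) * Real.exp 4 := by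
      rw [← hqy]
      calc |q.eval y| ≤ (1+A)*(K:ℝ) * (Chebyshev.T ℝ (K:ℤ)).eval y := hcheb
        _ ≤ (1+A)*(K:ℝ) * (y+sy)^K := mul_le_mul_of_nonneg_left hTle hMpos
        _ ≤ (1+A)*(K:ℝ) * Real.exp 4 := mul_le_mul_of_nonneg_left hphiK hMpos
    have hQt : |Q.eval t| ≤ ((1+A)*Real.exp 4) * K * t^2 := by
      rw [hHeval t, abs_mul, abs_of_nonneg (sq_nonneg t)]
      calc t^2 * |H.eval (t^2)| ≤ t^2 * ((1+A)*(K:ℝ)*Real.exp 4) :=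
            mul_le_mul_of_nonneg_left hHu (sq_nonneg t)
        _ = (1+A)*Real.exp 4 * K * t^2 := by ring
    exact le_trans hred hQt
  · -- easy region : 1/K < |t|
    have h1 : |Q.eval t| ≤ |t| + A/K := by
      have h := happ t ht
      calc |Q.eval t| = abs ((Q.eval t - |t|) + |t|) := by ring_nf
        _ ≤ abs (Q.eval t - |t|) + abs (abs t) := abs_add_le _ _
        _ ≤ A/K + |t| := by rw [abs_abs]; linarith
        _ = |t| + A/K := by ring
    have ht2 : |t|^2 = t^2 := sq_abs t
    have hKt : 1 ≤ (K:ℝ) * |t| := by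
      have h := mul_lt_mul_of_pos_left hEasy hKpos
      rw [mul_inv_cancel₀ (ne_of_gt hKpos)] at h
      linarith
    have h2 : |t| ≤ (K:ℝ) * t^2 := by
      nlinarith [mul_nonneg (abs_nonneg t) (show (0:ℝ) ≤ (K:ℝ)*|t| - 1 by linarith), sq_abs t]
    have h3 : A/K ≤ A * (K:ℝ) * t^2 := by
      rw [div_le_iff₀ hKpos]
      have h4 : 1 ≤ ((K:ℝ)*|t|)^2 := by nlinarith
      have h5 : ((K:ℝ)*|t|)^2 = (K:ℝ)*t^2*(K:ℝ) := by rw [mul_pow, sq_abs]; ring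
      calc A = A*1 := by ring
        _ ≤ A*((K:ℝ)*t^2*(K:ℝ)) := by rw [← h5]; exact mul_le_mul_of_nonneg_left h4 hA.le
        _ = A*(K:ℝ)*t^2*(K:ℝ) := by ring
    calc abs (|t| - abs (Q.eval t - |t|)) ≤ |Q.eval t| := hred
      _ ≤ |t| + A/K := h1
      _ ≤ (1+A) * K * t^2 := by linarith
      _ = (1+A) * K * t^2 * 1 := by ring
      _ ≤ (1+A) * K * t^2 * Real.exp 4 := by
          exact mul_le_mul_of_nonneg_left hexp1 (by positivity)
      _ = (1+A) * Real.exp 4 * K * t^2 := by ring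
end
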